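/- arXiv:1412.6958 — 2 statements merged into one kernel-verified Lean document; each statement's English description precedes it below -/
import Mathlib

section
/- Let G be a triangulated Laman graph on n vertices. Then every strongly rigid configuration p ∈ P_G is infinitesimally rigid, i.e., the Jacobian matrix ∂ρ_G(p)/∂p of the distance map has rank 2n − 3; moreover, the set of strongly rigid configurations is an open dense subset of P_G. -/
open scoped BigOperators

noncomputable section

/-- Points in the Euclidean plane. -/
abbrev Pt : Type := EuclideanSpace ℝ (Fin 2)

/-- The flattened space of planar configurations indexed by `ι`
(two real coordinates for each vertex). -/
abbrev Conf (ι : Type*) : Type _ := EuclideanSpace ℝ (ι × Fin 2)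

/-- The position of agent `i` in the configuration `p`. -/
def pt {ι : Type*} (p : Conf ι) (i : ι) : Pt := WithLp.toLp 2 (fun c => p (i, c))

/-- The sub-configuration of `p` on the vertices in `S`. -/
def restr {ι : Type*} (S : Set ι) (p : Conf ι) : Conf ↥S := WithLp.toLp 2 (fun ic => p ((ic.1 : ι), ic.2))

/-- The configuration space `P_G`: embeddings of the vertex set in the plane for which
adjacent vertices have distinct positions. -/
def configSpace {ι : Type*} (G : SimpleGraph ι) : Set (Conf ι) :=
  {p | ∀ i j : ι, G.Adj i j → pt p i ≠ pt p j}

/-- A Henneberg sequence for a triangulated Laman graph `G`, encoded by the order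
`ord` in which the vertices appear, and for every step `l ≥ 2` the two earlier steps
`par1 l`, `par2 l`, whose (adjacent) vertices the new vertex `ord l` is joined to.
The edges of `G` are exactly the initial edge together with the edges created at
each step. -/
structure Henneberg {ι : Type*} (G : SimpleGraph ι) : Type _ where
  two_le : 2 ≤ Nat.card ι
  ord : Fin (Nat.card ι) ≃ ι
  par1 : Fin (Nat.card ι) → Fin (Nat.card ι)
  par2 : Fin (Nat.card ι) → Fin (Nat.card ι)
  par1_lt : ∀ l : Fin (Nat.card ι), 2 ≤ (l : ℕ) → par1 l < l
  par2_lt : ∀ l : Fin (Nat.card ι), 2 ≤ (l : ℕ) → par2 l < l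
  par_ne : ∀ l : Fin (Nat.card ι), 2 ≤ (l : ℕ) → par1 l ≠ par2 l
  par_adj : ∀ l : Fin (Nat.card ι), 2 ≤ (l : ℕ) → G.Adj (ord (par1 l)) (ord (par2 l))
  edge_iff : ∀ i j : ι, G.Adj i j ↔
    (s(i, j) = s(ord ⟨0, by omega⟩, ord ⟨1, by omega⟩) ∨
      ∃ l : Fin (Nat.card ι), 2 ≤ (l : ℕ) ∧
        (s(i, j) = s(ord (par1 l), ord l) ∨ s(i, j) = s(ord (par2 l), ord l)))

/-- A graph is a triangulated Laman graph if it is (essentially) a single vertex, or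
it can be built by a Henneberg sequence in which each new vertex is joined to the two
endpoints of an existing edge. -/
def IsTriangulatedLaman {ι : Type*} (G : SimpleGraph ι) : Prop :=
  Nat.card ι ≤ 1 ∨ Nonempty (Henneberg G)

open Classical in
/-- The potential `Φ` induced by `G`, with control laws `f i j = u_{ij}(⬝, d̄_{ij})`:
`Φ(p) = Σ_{(i,j) ∈ E} ∫_1^{‖x_i - x_j‖} s u_{ij}(s, d̄_{ij}) ds`
(each edge is counted once; the double sum counts it twice, whence the factor 1/2). -/
def potential {ι : Type*} [Fintype ι] (G : SimpleGraph ι) (f : ι → ι → ℝ → ℝ)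
    (p : Conf ι) : ℝ :=
  (1 / 2) * ∑ i : ι, ∑ j : ι,
    if G.Adj i j then ∫ s in (1 : ℝ)..(dist (pt p i) (pt p j)), s * f i j s else 0

open Classical in
/-- The right-hand side of the formation control system
`ẋ_i = Σ_{j ∈ N_i} u_{ij}(‖x_i - x_j‖, d̄_{ij}) (x_j - x_i)`. -/
def formationField {ι : Type*} [Fintype ι] (G : SimpleGraph ι) (f : ι → ι → ℝ → ℝ)
    (p : Conf ι) : Conf ι :=
  WithLp.toLp 2 (fun ic => ∑ j : ι,
    if G.Adj ic.1 j then f ic.1 j (dist (pt p ic.1) (pt p j)) * (p (j, ic.2) - p (ic.1, ic.2))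
    else 0)

/-- A monotone attraction/repulsion function: `f` is C¹ on `ℝ_{>0}`,
`d(x f(x))/dx > 0` for `x > 0`, `f` has a unique (positive) zero, and
`∫_x^1 s f(s) ds → -∞` as `x → 0⁺`. -/
structure IsMonoAttRep (f : ℝ → ℝ) : Prop where
  contDiff : ContDiffOn ℝ 1 f (Set.Ioi 0)
  deriv_pos : ∀ x : ℝ, 0 < x → 0 < deriv (fun y => y * f y) x
  unique_zero : ∃! x : ℝ, 0 < x ∧ f x = 0
  collision : Filter.Tendsto (fun x : ℝ => ∫ s in x..(1 : ℝ), s * f s)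
    (nhdsWithin 0 (Set.Ioi 0)) Filter.atBot

/-- 2×2 rotation matrices. -/
def IsRotation (θ : Matrix (Fin 2) (Fin 2) ℝ) : Prop := θ * θ.transpose = 1 ∧ θ.det = 1

/-- The action of `γ = (θ, v) ∈ SE(2)` on configurations: `γ·p = (θ x_1 + v, …, θ x_n + v)`. -/
def se2Act {ι : Type*} (θ : Matrix (Fin 2) (Fin 2) ℝ) (v : Pt) (p : Conf ι) : Conf ι :=
  WithLp.toLp 2 (fun ic => θ.mulVec (pt p ic.1) ic.2 + v ic.2)

/-- The SE(2)-orbit `O_p` of a configuration `p`. -/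
def se2Orbit {ι : Type*} (p : Conf ι) : Set (Conf ι) :=
  {q | ∃ θ v, IsRotation θ ∧ q = se2Act θ v p}

/-- Rotation by 90 degrees. -/
def rotJ : Matrix (Fin 2) (Fin 2) ℝ := !![0, -1; 1, 0]

/-- The infinitesimal rotation of a configuration. -/
def infRot {ι : Type*} (p : Conf ι) : Conf ι := WithLp.toLp 2 (fun ic => rotJ.mulVec (pt p ic.1) ic.2)

/-- The infinitesimal translation in coordinate direction `c`. -/
def transl (ι : Type*) (c : Fin 2) : Conf ι := WithLp.toLp 2 (fun ic => if ic.2 = c then 1 else 0)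

/-- The tangent space at `p` of the SE(2)-orbit `O_p`. -/
def orbitTangent {ι : Type*} (p : Conf ι) : Submodule ℝ (Conf ι) :=
  Submodule.span ℝ {infRot p, transl ι 0, transl ι 1}

/-- The Hessian matrix `H_p = ∂²Φ(p)/∂p²`. -/
def hessianMat {ι : Type*} [Fintype ι] [DecidableEq ι] (Φ : Conf ι → ℝ) (p : Conf ι) :
    Matrix (ι × Fin 2) (ι × Fin 2) ℝ :=
  Matrix.of fun a b =>
    iteratedFDeriv ℝ 2 Φ p ![EuclideanSpace.single a 1, EuclideanSpace.single b 1]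

/-- The Hessian of `Φ` at `p` with respect to the coordinates of the vertices in `S`
(for `Φ` depending only on those coordinates this is the Hessian of the induced
function of the positions of the vertices in `S`). -/
def hessianMatOn {ι : Type*} [Fintype ι] [DecidableEq ι] (Φ : Conf ι → ℝ) (p : Conf ι) (S : Set ι) :
    Matrix (↥S × Fin 2) (↥S × Fin 2) ℝ :=
  Matrix.of fun a b => hessianMat Φ p ((a.1 : ι), a.2) ((b.1 : ι), b.2)

open Classical in
/-- `N₊(A)`: the number of positive eigenvalues of a real symmetric matrix,
counted with multiplicity. -/
def nPos {m : Type*} [Finite m] (A : Matrix m m ℝ) : ℕ :=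
  letI := Fintype.ofFinite m
  letI := Classical.decEq m
  if h : A.IsHermitian then Fintype.card {i // 0 < h.eigenvalues i} else 0

open Classical in
/-- `N₋(A)`: the number of negative eigenvalues of a real symmetric matrix,
counted with multiplicity. -/
def nNeg {m : Type*} [Finite m] (A : Matrix m m ℝ) : ℕ :=
  letI := Fintype.ofFinite m
  letI := Classical.decEq m
  if h : A.IsHermitian then Fintype.card {i // h.eigenvalues i < 0} else 0

open Classical in
/-- `N₀(A)`: the number of zero eigenvalues of a real symmetric matrix,
counted with multiplicity. -/
def nZero {m : Type*} [Finite m] (A : Matrix m m ℝ) : ℕ :=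
  letI := Fintype.ofFinite m
  letI := Classical.decEq m
  if h : A.IsHermitian then Fintype.card {i // h.eigenvalues i = 0} else 0

/-- `Φ` is an equivariant Morse function on `P_G`: it has finitely many critical orbits,
and each critical orbit is nondegenerate (the Hessian has exactly three zero eigenvalues). -/
def IsEquivariantMorse {ι : Type*} [Fintype ι] [DecidableEq ι] (G : SimpleGraph ι)
    (Φ : Conf ι → ℝ) : Prop :=
  {O : Set (Conf ι) | ∃ p ∈ configSpace G, gradient Φ p = 0 ∧ O = se2Orbit p}.Finite ∧
  ∀ p ∈ configSpace G, gradient Φ p = 0 → nZero (hessianMat Φ p) = 3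

/-- `i`, `j`, `k` form a 3-cycle of `G`. -/
def Is3Cycle {ι : Type*} (G : SimpleGraph ι) (i j k : ι) : Prop :=
  G.Adj i j ∧ G.Adj i k ∧ G.Adj j k

/-- A framework `(G, p)` is strongly rigid if every 3-cycle of `G` is embedded by `p`
as a nondegenerate triangle. -/
def StronglyRigid {ι : Type*} (G : SimpleGraph ι) (p : Conf ι) : Prop :=
  ∀ i j k : ι, Is3Cycle G i j k →
    LinearIndependent ℝ ![pt p j - pt p i, pt p k - pt p i]

/-- The target distances satisfy the strict triangle inequalities associated with `G`. -/
def StrictTriangleIneqs {ι : Type*} (G : SimpleGraph ι) (dbar : ι → ι → ℝ) : Prop :=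
  ∀ i j k : ι, Is3Cycle G i j k →
    dbar j k < dbar i j + dbar i k ∧ dbar i k < dbar i j + dbar j k ∧
      dbar i j < dbar i k + dbar j k

/-- A triangulated formation system: a formation control system induced by a
triangulated Laman graph, with target distances satisfying the strict triangle
inequalities, monotone attraction/repulsion control laws vanishing at the target
distances, and whose potential is an equivariant Morse function. -/
structure IsTriFormation {ι : Type*} [Fintype ι] [DecidableEq ι] (G : SimpleGraph ι)
    (f : ι → ι → ℝ → ℝ) (dbar : ι → ι → ℝ) : Prop where
  laman : IsTriangulatedLaman G
  fsymm : ∀ i j, f i j = f j i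
  dsymm : ∀ i j, dbar i j = dbar j i
  dpos : ∀ i j, G.Adj i j → 0 < dbar i j
  mono : ∀ i j, G.Adj i j → IsMonoAttRep (f i j)
  fzero : ∀ i j, G.Adj i j → f i j (dbar i j) = 0
  triangle : StrictTriangleIneqs G dbar
  morse : IsEquivariantMorse G (potential G f)

/-- The (critical) orbit of `p` is exponentially stable: the Hessian of `Φ` at `p` has
exactly three zero eigenvalues and no negative eigenvalues (all the others positive). -/
def ExpStableAt {ι : Type*} [Fintype ι] [DecidableEq ι] (Φ : Conf ι → ℝ) (p : Conf ι) : Prop :=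
  nZero (hessianMat Φ p) = 3 ∧ nNeg (hessianMat Φ p) = 0

/-- Generating relation for the independent partition: at each step `l ≥ 2` of the
Henneberg sequence in which the new vertex is aligned with its two parents, the two
new edges are related to the parent edge. -/
def triGen {ι : Type*} {G : SimpleGraph ι} (H : Henneberg G) (p : Conf ι) :
    Sym2 ι → Sym2 ι → Prop := fun e e' =>
  ∃ l : Fin (Nat.card ι), 2 ≤ (l : ℕ) ∧
    Collinear ℝ {pt p (H.ord (H.par1 l)), pt p (H.ord (H.par2 l)), pt p (H.ord l)} ∧
    e' = s(H.ord (H.par1 l), H.ord (H.par2 l)) ∧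
    (e = s(H.ord (H.par1 l), H.ord l) ∨ e = s(H.ord (H.par2 l), H.ord l))

/-- The independent partition of the edge set of `G` for the framework `(G, p)`,
computed along the Henneberg sequence `H`. -/
def indepPartition {ι : Type*} {G : SimpleGraph ι} (H : Henneberg G) (p : Conf ι) :
    Set (Set (Sym2 ι)) :=
  {C | ∃ e ∈ G.edgeSet, C = {e' | e' ∈ G.edgeSet ∧ Relation.EqvGen (triGen H p) e e'}}

/-- The set `V_i` of vertices incident to the edges in a class `C`. -/
def classVerts {ι : Type*} (C : Set (Sym2 ι)) : Set ι := {v | ∃ e ∈ C, v ∈ e}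

end

open Classical in
/-- The distance map `ρ_G` (extended by `0` on non-edges; repeating each edge twice and
padding with zeros does not change the rank of the Jacobian). -/
noncomputable def rhoMap {ι : Type*} [Fintype ι] (G : SimpleGraph ι) (p : Conf ι) :
    ι × ι → ℝ :=
  fun ij => if G.Adj ij.1 ij.2 then dist (pt p ij.1) (pt p ij.2) ^ 2 else 0

open scoped RealInnerProductSpace

lemma Pt.ext2 {v : Pt} (h0 : v 0 = 0) (h1 : v 1 = 0) : v = 0 := by
  apply PiLp.ext; intro c; fin_cases c <;> simpa

lemma inner_pt (u v : Pt) : ⟪u, v⟫ = u 0 * v 0 + u 1 * v 1 := by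
  simp [PiLp.inner_apply, RCLike.inner_apply, Fin.sum_univ_two, mul_comm]

lemma pt_sub_apply {ι : Type*} (p q : Conf ι) (i : ι) (c : Fin 2) :
    (pt p i - pt q i) c = p (i, c) - q (i, c) := by simp [pt]

lemma linIndep_iff_det {v w : Pt} :
    LinearIndependent ℝ ![v, w] ↔ v 0 * w 1 - v 1 * w 0 ≠ 0 := by
  rw [LinearIndependent.pair_iff]
  constructor
  · intro h hdet
    have e0 := h (w 0) (-(v 0)) (by
      ext c
      fin_cases c <;>
        simp only [PiLp.add_apply, PiLp.smul_apply, smul_eq_mul, PiLp.zero_apply, Fin.mk_zero, Fin.mk_one, Fin.isValue] <;>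
        [ring; linear_combination -hdet])
    have e1 := h (w 1) (-(v 1)) (by
      ext c
      fin_cases c <;>
        simp only [PiLp.add_apply, PiLp.smul_apply, smul_eq_mul, PiLp.zero_apply, Fin.mk_zero, Fin.mk_one, Fin.isValue] <;>
        [linear_combination hdet; ring])
    have hv : v = 0 := Pt.ext2 (neg_eq_zero.mp e0.2) (neg_eq_zero.mp e1.2)
    have := h 1 0 (by simp [hv])
    exact one_ne_zero this.1
  · intro hdet s t hst
    have h0 : s * v 0 + t * w 0 = 0 := by
      have := congrArg (fun x : Pt => x 0) hst
      simpa [PiLp.add_apply, PiLp.smul_apply, smul_eq_mul] using this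
    have h1 : s * v 1 + t * w 1 = 0 := by
      have := congrArg (fun x : Pt => x 1) hst
      simpa [PiLp.add_apply, PiLp.smul_apply, smul_eq_mul] using this
    constructor
    · have hs : s * (v 0 * w 1 - v 1 * w 0) = 0 := by linear_combination w 1 * h0 - w 0 * h1
      exact (mul_eq_zero.mp hs).resolve_right hdet
    · have ht : t * (v 0 * w 1 - v 1 * w 0) = 0 := by linear_combination v 0 * h1 - v 1 * h0
      exact (mul_eq_zero.mp ht).resolve_right hdet

lemma eq_zero_of_perp {a b z : Pt} (h : LinearIndependent ℝ ![a, b])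
    (ha : a 0 * z 0 + a 1 * z 1 = 0) (hb : b 0 * z 0 + b 1 * z 1 = 0) : z = 0 := by
  rw [linIndep_iff_det] at h
  apply Pt.ext2
  · have h' : z 0 * (a 0 * b 1 - a 1 * b 0) = 0 := by linear_combination b 1 * ha - a 1 * hb
    exact (mul_eq_zero.mp h').resolve_right h
  · have h' : z 1 * (a 0 * b 1 - a 1 * b 0) = 0 := by linear_combination a 0 * hb - b 0 * ha
    exact (mul_eq_zero.mp h').resolve_right h

noncomputable def ptL {ι : Type*} [Fintype ι] (i : ι) : Conf ι →L[ℝ] Pt :=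
  LinearMap.toContinuousLinearMap
    { toFun := fun q => pt q i
      map_add' := fun _ _ => rfl
      map_smul' := fun _ _ => by ext; simp [pt] }

@[simp] lemma ptL_apply {ι : Type*} [Fintype ι] (i : ι) (q : Conf ι) : ptL i q = pt q i := by simp [ptL]; rfl

lemma dense_ne_zero {E : Type*} [NormedAddCommGroup E] [NormedSpace ℝ E]
    {g : E → ℝ} (hg : ∀ x, AnalyticAt ℝ g x) (h0 : ∃ x, g x ≠ 0) :
    Dense {x | g x ≠ 0} := by
  intro x
  rw [mem_closure_iff]
  intro o ho hxo
  by_contra hemp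
  have hzero : ∀ y ∈ o, g y = 0 := by
    intro y hy
    by_contra hne
    exact hemp ⟨y, hy, hne⟩
  have hev : g =ᶠ[nhds x] 0 := Filter.eventually_of_mem (ho.mem_nhds hxo) hzero
  obtain ⟨x0, hx0⟩ := h0
  have := AnalyticOnNhd.eqOn_zero_of_preconnected_of_eventuallyEq_zero
    (fun y _ => hg y) isPreconnected_univ (Set.mem_univ x) hev
  exact hx0 (this (Set.mem_univ x0))

def gdet {ι : Type*} (t : ι × ι × ι) (p : Conf ι) : ℝ :=
  (p (t.2.1, 0) - p (t.1, 0)) * (p (t.2.2, 1) - p (t.1, 1)) -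
    (p (t.2.1, 1) - p (t.1, 1)) * (p (t.2.2, 0) - p (t.1, 0))

lemma gdet_eq {ι : Type*} (i j k : ι) (p : Conf ι) :
    gdet (i, j, k) p = (pt p j - pt p i) 0 * (pt p k - pt p i) 1 -
      (pt p j - pt p i) 1 * (pt p k - pt p i) 0 := by simp [gdet, pt]

lemma gdet_analyticAt {ι : Type*} [Fintype ι] (t : ι × ι × ι) (x : Conf ι) :
    AnalyticAt ℝ (gdet t) x := by
  have hc : ∀ a : ι × Fin 2, AnalyticAt ℝ (fun p : Conf ι => p a) x := fun a =>
    ((EuclideanSpace.proj a : Conf ι →L[ℝ] ℝ)).analyticAt x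
  exact (((hc _).sub (hc _)).mul ((hc _).sub (hc _))).sub
    (((hc _).sub (hc _)).mul ((hc _).sub (hc _)))

lemma gdet_continuous {ι : Type*} [Fintype ι] (t : ι × ι × ι) : Continuous (gdet t) :=
  continuous_iff_continuousAt.mpr fun x => (gdet_analyticAt t x).continuousAt

open Classical in
noncomputable def dcomp {ι : Type*} [Fintype ι] (G : SimpleGraph ι) (p : Conf ι) (ij : ι × ι) :
    Conf ι →L[ℝ] ℝ :=
  if G.Adj ij.1 ij.2 then
    (2:ℝ) • ((innerSL ℝ (pt p ij.1 - pt p ij.2)).comp (ptL ij.1 - ptL ij.2)) else 0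

lemma hasFDerivAt_rhoMap {ι : Type*} [Fintype ι] (G : SimpleGraph ι) (p : Conf ι) :
    HasFDerivAt (rhoMap G) (ContinuousLinearMap.pi (dcomp G p)) p := by
  rw [hasFDerivAt_pi]
  rintro ⟨i, j⟩
  by_cases h : G.Adj i j
  · have hfun : (fun q : Conf ι => rhoMap G q (i, j)) =
        fun q => ⟪(ptL i - ptL j) q, (ptL i - ptL j) q⟫ := by
      funext q
      simp only [rhoMap, if_pos h, ContinuousLinearMap.sub_apply, ptL_apply]
      rw [dist_eq_norm, ← real_inner_self_eq_norm_sq]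
    rw [hfun]
    have hA := ((ptL i - ptL j) : Conf ι →L[ℝ] Pt).hasFDerivAt (x := p)
    have hinner := hA.inner ℝ hA
    have heq : dcomp G p (i, j) =
        (fderivInnerCLM ℝ ((ptL i - ptL j) p, (ptL i - ptL j) p)).comp
          ((((ptL i - ptL j) : Conf ι →L[ℝ] Pt)).prod (((ptL i - ptL j) : Conf ι →L[ℝ] Pt))) := by
      apply ContinuousLinearMap.ext
      intro q
      simp only [dcomp, if_pos h, ContinuousLinearMap.smul_apply, ContinuousLinearMap.comp_apply,
        innerSL_apply_apply, fderivInnerCLM_apply, ContinuousLinearMap.prod_apply, ptL_apply,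
        ContinuousLinearMap.sub_apply, smul_eq_mul]
      rw [real_inner_comm (pt q i - pt q j)]
      ring
    rw [heq]
    exact hinner
  · have hfun : (fun q : Conf ι => rhoMap G q (i, j)) = fun _ => (0:ℝ) := by
      funext q; simp [rhoMap, h]
    rw [hfun]
    have h0 : dcomp G p (i, j) = 0 := by simp [dcomp, h]
    rw [h0]
    exact hasFDerivAt_const 0 p

lemma rotJ_mulVec0 (x : Pt) : rotJ.mulVec x 0 = -(x 1) := by
  simp [rotJ, Matrix.mulVec, dotProduct, Fin.sum_univ_two, Matrix.vecHead, Matrix.vecTail]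

lemma rotJ_mulVec1 (x : Pt) : rotJ.mulVec x 1 = x 0 := by
  simp [rotJ, Matrix.mulVec, dotProduct, Fin.sum_univ_two, Matrix.vecHead, Matrix.vecTail]

lemma ptd_apply {ι : Type*} (a : Conf ι) (i j : ι) (c : Fin 2) :
    (pt a i - pt a j) c = a (i, c) - a (j, c) := by simp [pt]

lemma henne_ker_dim {ι : Type*} [Fintype ι] {G : SimpleGraph ι} (H : Henneberg G)
    {p : Conf ι} (hp : p ∈ configSpace G) (hsr : StronglyRigid G p)
    (K : Submodule ℝ (Conf ι))
    (hK : ∀ q, q ∈ K ↔ ∀ i j, G.Adj i j → ⟪pt p i - pt p j, pt q i - pt q j⟫ = 0) :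
    Module.finrank ℝ K = 3 := by
  have hn : 2 ≤ Nat.card ι := H.two_le
  set v0 : ι := H.ord ⟨0, by omega⟩ with hv0
  set v1 : ι := H.ord ⟨1, by omega⟩ with hv1
  have hadj01 : G.Adj v0 v1 := (H.edge_iff v0 v1).mpr (Or.inl rfl)
  have hd : pt p v1 - pt p v0 ≠ 0 := sub_ne_zero.mpr (Ne.symm (hp v0 v1 hadj01))
  set d0 : ℝ := p (v1, 0) - p (v0, 0) with hd0
  set d1 : ℝ := p (v1, 1) - p (v0, 1) with hd1
  have hdne : d0 ≠ 0 ∨ d1 ≠ 0 := by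
    by_contra hcon
    push_neg at hcon
    exact hd (Pt.ext2 (by rw [ptd_apply]; exact hcon.1) (by rw [ptd_apply]; exact hcon.2))
  -- q ∈ K vanishing on the base edge vanishes everywhere
  have zero_of : ∀ q, q ∈ K → pt q v0 = 0 → pt q v1 = 0 → q = 0 := by
    intro q hq h0 h1
    have main : ∀ m : ℕ, ∀ hm : m < Nat.card ι, pt q (H.ord ⟨m, hm⟩) = 0 := by
      intro m
      induction m using Nat.strong_induction_on with
      | _ m ih =>
        intro hm
        rcases Nat.lt_or_ge m 2 with h2 | h2
        · interval_cases m
          · exact h0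
          · exact h1
        · set l : Fin (Nat.card ι) := ⟨m, hm⟩ with hldef
          have hl2 : 2 ≤ (l : ℕ) := h2
          have haQ : pt q (H.ord (H.par1 l)) = 0 := by
            have hlt : ((H.par1 l : Fin (Nat.card ι)) : ℕ) < m := H.par1_lt l hl2
            have := ih _ hlt (H.par1 l).isLt
            simpa using this
          have hbQ : pt q (H.ord (H.par2 l)) = 0 := by
            have hlt : ((H.par2 l : Fin (Nat.card ι)) : ℕ) < m := H.par2_lt l hl2
            have := ih _ hlt (H.par2 l).isLt
            simpa using this
          have haA : G.Adj (H.ord (H.par1 l)) (H.ord l) :=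
            (H.edge_iff _ _).mpr (Or.inr ⟨l, hl2, Or.inl rfl⟩)
          have haB : G.Adj (H.ord (H.par2 l)) (H.ord l) :=
            (H.edge_iff _ _).mpr (Or.inr ⟨l, hl2, Or.inr rfl⟩)
          have hli := hsr (H.ord l) (H.ord (H.par1 l)) (H.ord (H.par2 l))
            ⟨haA.symm, haB.symm, H.par_adj l hl2⟩
          have e1 := (hK q).mp hq _ _ haA
          have e2 := (hK q).mp hq _ _ haB
          rw [haQ, zero_sub, inner_neg_right, neg_eq_zero, inner_pt] at e1
          rw [hbQ, zero_sub, inner_neg_right, neg_eq_zero, inner_pt] at e2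
          exact eq_zero_of_perp hli e1 e2
    ext ic
    have hz : pt q ic.1 = 0 := by
      have := main (H.ord.symm ic.1).val (H.ord.symm ic.1).isLt
      simpa using this
    have := congrArg (fun x : Pt => x ic.2) hz
    simpa [pt] using this
  -- upper bound via an injective map to Pt × ℝ
  let ψ : Conf ι →L[ℝ] Pt × ℝ :=
    (ptL v0).prod (d0 • (EuclideanSpace.proj ((v1, (1 : Fin 2)) : ι × Fin 2)) -
      d1 • (EuclideanSpace.proj ((v1, (0 : Fin 2)) : ι × Fin 2)))
  have hψ : ∀ q : Conf ι, ψ q = (pt q v0, d0 * q (v1, 1) - d1 * q (v1, 0)) := by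
    intro q
    simp [ψ, ContinuousLinearMap.prod_apply, ContinuousLinearMap.sub_apply,
      ContinuousLinearMap.smul_apply, PiLp.proj_apply, smul_eq_mul]
  have hinj : Function.Injective (ψ.toLinearMap.comp K.subtype) := by
    rw [← LinearMap.ker_eq_bot, LinearMap.ker_eq_bot']
    rintro ⟨q, hq⟩ hq0
    have hqz : ψ q = 0 := hq0
    rw [hψ, Prod.mk_eq_zero] at hqz
    obtain ⟨hz0, hz1⟩ := hqz
    have e := (hK q).mp hq v0 v1 hadj01
    rw [hz0, zero_sub, inner_neg_right, neg_eq_zero, inner_pt] at e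
    -- e : (pt p v0 - pt p v1) 0 * pt q v1 0 + (pt p v0 - pt p v1) 1 * pt q v1 1 = 0
    rw [ptd_apply, ptd_apply] at e
    have hz : pt q v1 = 0 := by
      have hs : d0 * d0 + d1 * d1 ≠ 0 := by
        rcases hdne with h | h
        · intro hc; exact h (by nlinarith [sq_nonneg d0, sq_nonneg d1])
        · intro hc; exact h (by nlinarith [sq_nonneg d0, sq_nonneg d1])
      have c0 : pt q v1 0 * (d0 * d0 + d1 * d1) = 0 := by
        have hz1' : d0 * pt q v1 1 - d1 * pt q v1 0 = 0 := by simpa [pt] using hz1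
        linear_combination (-d0) * e - d1 * hz1'
      have c1 : pt q v1 1 * (d0 * d0 + d1 * d1) = 0 := by
        have hz1' : d0 * pt q v1 1 - d1 * pt q v1 0 = 0 := by simpa [pt] using hz1
        linear_combination (-d1) * e + d0 * hz1'
      exact Pt.ext2 ((mul_eq_zero.mp c0).resolve_right hs)
        ((mul_eq_zero.mp c1).resolve_right hs)
    exact Subtype.ext (zero_of q hq hz0 hz)
  have hub : Module.finrank ℝ (↥K) ≤ 3 := by
    have h := LinearMap.finrank_le_finrank_of_injective hinj
    have : Module.finrank ℝ (Pt × ℝ) = 3 := by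
      simp [Module.finrank_prod, finrank_euclideanSpace]
    omega
  -- lower bound: translations and infinitesimal rotation
  have hmem_t : ∀ c : Fin 2, transl ι c ∈ K := by
    intro c
    rw [hK]
    intro i j hadj
    have hz : pt (transl ι c) i - pt (transl ι c) j = 0 := by
      ext c'
      rw [ptd_apply]
      simp [transl]
    rw [hz, inner_zero_right]
  have hmem_r : infRot p ∈ K := by
    rw [hK]
    intro i j hadj
    rw [inner_pt, ptd_apply, ptd_apply, ptd_apply, ptd_apply]
    simp only [infRot]
    rw [rotJ_mulVec0, rotJ_mulVec0, rotJ_mulVec1, rotJ_mulVec1]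
    simp only [pt]
    ring
  have hli3 : LinearIndependent ℝ ![transl ι 0, transl ι 1, infRot p] := by
    rw [Fintype.linearIndependent_iff]
    intro g hg
    rw [Fin.sum_univ_three] at hg
    simp only [Matrix.cons_val_zero, Matrix.cons_val_one, Matrix.head_cons,
      Matrix.cons_val_two, Matrix.tail_cons] at hg
    have E : ∀ (i : ι) (c : Fin 2),
        g 0 * transl ι 0 (i, c) + g 1 * transl ι 1 (i, c) + g 2 * infRot p (i, c) = 0 := by
      intro i c
      have := congrArg (fun x : Conf ι => x (i, c)) hg
      simpa [PiLp.add_apply, PiLp.smul_apply, PiLp.zero_apply, smul_eq_mul] using this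
    have E00 := E v0 0
    have E01 := E v0 1
    have E10 := E v1 0
    have E11 := E v1 1
    simp only [transl, infRot] at E00 E01 E10 E11
    rw [rotJ_mulVec0 (pt p v0)] at E00
    rw [rotJ_mulVec1 (pt p v0)] at E01
    rw [rotJ_mulVec0 (pt p v1)] at E10
    rw [rotJ_mulVec1 (pt p v1)] at E11
    simp only [pt, if_pos rfl, Fin.isValue] at E00 E01 E10 E11
    norm_num at E00 E01 E10 E11
    have hA : g 2 * d1 = 0 := by linear_combination E00 - E10
    have hB : g 2 * d0 = 0 := by linear_combination E11 - E01
    have hg2 : g 2 = 0 := by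
      rcases hdne with h | h
      · exact (mul_eq_zero.mp hB).resolve_right h
      · exact (mul_eq_zero.mp hA).resolve_right h
    rw [hg2] at E00 E01
    norm_num at E00 E01
    intro i'
    fin_cases i' <;> simp [E00, E01, hg2]
  have hlb : 3 ≤ Module.finrank ℝ (↥K) := by
    let w : Fin 3 → K := ![⟨transl ι 0, hmem_t 0⟩, ⟨transl ι 1, hmem_t 1⟩, ⟨infRot p, hmem_r⟩]
    have hw : LinearIndependent ℝ w := by
      apply LinearIndependent.of_comp K.subtype
      have hcomp : K.subtype ∘ w = ![transl ι 0, transl ι 1, infRot p] := by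
        funext i'
        fin_cases i' <;> rfl
      rw [hcomp]
      exact hli3
    simpa using hw.fintype_card_le_finrank
  omega

lemma sr_iff {ι : Type*} (G : SimpleGraph ι) (p : Conf ι) :
    StronglyRigid G p ↔ ∀ t : ι × ι × ι, Is3Cycle G t.1 t.2.1 t.2.2 → gdet t p ≠ 0 := by
  constructor
  · rintro h ⟨i, j, k⟩ h3
    rw [gdet_eq]
    exact (linIndep_iff_det).mp (h i j k h3)
  · intro h i j k h3
    rw [linIndep_iff_det]
    have := h (i, j, k) h3
    rwa [gdet_eq] at this

lemma configSpace_isOpen {ι : Type*} [Fintype ι] (G : SimpleGraph ι) :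
    IsOpen (configSpace G) := by
  have hset : configSpace G =
      ⋂ e : ι × ι, {p : Conf ι | G.Adj e.1 e.2 → pt p e.1 ≠ pt p e.2} := by
    ext p
    simp only [Set.mem_iInter, Set.mem_setOf_eq]
    exact ⟨fun h e => h e.1 e.2, fun h i j => h (i, j)⟩
  rw [hset]
  apply isOpen_iInter_of_finite
  rintro ⟨i, j⟩
  by_cases h : G.Adj i j
  · have he : {p : Conf ι | G.Adj i j → pt p i ≠ pt p j} = {p | pt p i ≠ pt p j} := by
      ext p; simp [h]
    rw [he]
    exact isOpen_ne_fun (f := fun p : Conf ι => pt p i) (g := fun p : Conf ι => pt p j)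
        ((ptL i).continuous.congr (fun q => ptL_apply i q))
        ((ptL j).continuous.congr (fun q => ptL_apply j q))
  · have he : {p : Conf ι | G.Adj i j → pt p i ≠ pt p j} = Set.univ := by
      ext p; simp [h]
    rw [he]
    exact isOpen_univ

lemma cyc_set_isOpen {ι : Type*} [Fintype ι] (G : SimpleGraph ι) (t : ι × ι × ι) :
    IsOpen {p : Conf ι | Is3Cycle G t.1 t.2.1 t.2.2 → gdet t p ≠ 0} := by
  by_cases h3 : Is3Cycle G t.1 t.2.1 t.2.2
  · have he : {p : Conf ι | Is3Cycle G t.1 t.2.1 t.2.2 → gdet t p ≠ 0} =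
        (gdet t) ⁻¹' {x | x ≠ 0} := by
      ext p; simp [h3]
    rw [he]
    exact IsOpen.preimage (gdet_continuous t) isOpen_ne
  · have he : {p : Conf ι | Is3Cycle G t.1 t.2.1 t.2.2 → gdet t p ≠ 0} = Set.univ := by
      ext p; simp [h3]
    rw [he]
    exact isOpen_univ

lemma srSet_eq {ι : Type*} [Fintype ι] (G : SimpleGraph ι) :
    {p : Conf ι | StronglyRigid G p} =
      ⋂ t : ι × ι × ι, {p : Conf ι | Is3Cycle G t.1 t.2.1 t.2.2 → gdet t p ≠ 0} := by
  ext p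
  simp only [Set.mem_iInter, Set.mem_setOf_eq]
  rw [sr_iff]

lemma srSet_isOpen {ι : Type*} [Fintype ι] (G : SimpleGraph ι) :
    IsOpen {p : Conf ι | StronglyRigid G p} := by
  rw [srSet_eq]
  exact isOpen_iInter_of_finite (cyc_set_isOpen G)

open Classical in
lemma srSet_dense {ι : Type*} [Fintype ι] (G : SimpleGraph ι) :
    Dense {p : Conf ι | StronglyRigid G p} := by
  rw [srSet_eq]
  apply dense_iInter_of_isOpen (cyc_set_isOpen G)
  intro t
  by_cases h3 : Is3Cycle G t.1 t.2.1 t.2.2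
  · have he : {p : Conf ι | Is3Cycle G t.1 t.2.1 t.2.2 → gdet t p ≠ 0} =
        {p : Conf ι | gdet t p ≠ 0} := by
      ext p; simp [h3]
    rw [he]
    apply dense_ne_zero (gdet_analyticAt t)
    obtain ⟨i, j, k⟩ := t
    obtain ⟨hij, hik, hjk⟩ := h3
    refine ⟨(WithLp.toLp 2 fun ic : ι × Fin 2 => if ic.1 = j ∧ ic.2 = 0 then 1 else
      if ic.1 = k ∧ ic.2 = 1 then 1 else 0 : Conf ι), ?_⟩
    simp only [gdet]
    norm_num [hij.ne, hik.ne, hjk.ne, hjk.ne']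
  · have he : {p : Conf ι | Is3Cycle G t.1 t.2.1 t.2.2 → gdet t p ≠ 0} = Set.univ := by
      ext p; simp [h3]
    rw [he]
    exact dense_univ


/-- Proposition 2.3 of the paper. For a triangulated Laman graph `G` on
`n` vertices, every strongly rigid configuration is infinitesimally rigid (the Jacobian of
the distance map has rank `2n - 3`), and the strongly rigid configurations form an open
dense subset of `P_G`. -/
theorem stmt12 {ι : Type*} [Fintype ι] (n : ℕ) (hcard : Fintype.card ι = n)
    (G : SimpleGraph ι) (hG : IsTriangulatedLaman G) :
    (∀ p ∈ configSpace G, StronglyRigid G p →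
      Module.finrank ℝ ↥(LinearMap.range (fderiv ℝ (rhoMap G) p).toLinearMap)
        = 2 * n - 3) ∧
    IsOpen {p : Conf ι | p ∈ configSpace G ∧ StronglyRigid G p} ∧
    configSpace G ⊆ closure {p : Conf ι | p ∈ configSpace G ∧ StronglyRigid G p} := by
  refine ⟨?_, ?_, ?_⟩
  · intro p hp hsr
    rcases hG with hsmall | hH
    · -- at most one vertex: no edges, zero map
      have hn1 : n ≤ 1 := by rwa [Nat.card_eq_fintype_card, hcard] at hsmall
      have hsub : Subsingleton ι := Fintype.card_le_one_iff_subsingleton.mp (by omega)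
      have hno : ∀ i j : ι, ¬ G.Adj i j := fun i j hadj =>
        G.ne_of_adj hadj (Subsingleton.elim i j)
      have hrho : rhoMap G = fun _ _ => (0 : ℝ) := by
        funext q ij
        simp [rhoMap, hno ij.1 ij.2]
      rw [hrho]
      rw [fderiv_fun_const]
      have h23 : 2 * n - 3 = 0 := by omega
      rw [h23]
      simp
    · obtain ⟨H⟩ := hH
      have hker := hasFDerivAt_rhoMap G p
      rw [hker.fderiv]
      have hkermem : ∀ q : Conf ι,
          q ∈ LinearMap.ker (ContinuousLinearMap.pi (dcomp G p)).toLinearMap ↔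
          ∀ i j, G.Adj i j → ⟪pt p i - pt p j, pt q i - pt q j⟫ = 0 := by
        intro q
        rw [LinearMap.mem_ker]
        constructor
        · intro h0 i j hadj
          have hc : (ContinuousLinearMap.pi (dcomp G p)) q (i, j) = 0 := congrFun h0 (i, j)
          simp only [ContinuousLinearMap.pi_apply, dcomp, if_pos hadj,
            ContinuousLinearMap.smul_apply, ContinuousLinearMap.comp_apply, innerSL_apply_apply,
            ContinuousLinearMap.sub_apply, ptL_apply, smul_eq_mul] at hc
          linarith
        · intro h
          have hz : (ContinuousLinearMap.pi (dcomp G p)) q = 0 := by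
            funext ij
            obtain ⟨i, j⟩ := ij
            simp only [ContinuousLinearMap.pi_apply, Pi.zero_apply, dcomp]
            by_cases hadj : G.Adj i j
            · simp only [if_pos hadj, ContinuousLinearMap.smul_apply,
                ContinuousLinearMap.comp_apply, innerSL_apply_apply, ContinuousLinearMap.sub_apply,
                ptL_apply, smul_eq_mul, h i j hadj, mul_zero]
            · simp [if_neg hadj]
          exact hz
      have hker3 : Module.finrank ℝ
          ↥(LinearMap.ker (ContinuousLinearMap.pi (dcomp G p)).toLinearMap) = 3 :=
        henne_ker_dim H hp hsr _ hkermem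
      have hrn := LinearMap.finrank_range_add_finrank_ker
        (ContinuousLinearMap.pi (dcomp G p)).toLinearMap
      have hdom : Module.finrank ℝ (Conf ι) = 2 * n := by
        rw [finrank_euclideanSpace, Fintype.card_prod, Fintype.card_fin, hcard]
        ring
      rw [hker3, hdom] at hrn
      omega
  · exact (configSpace_isOpen G).inter (srSet_isOpen G)
  · exact (srSet_dense G).open_subset_closure_inter (configSpace_isOpen G)
end

section
/- Let G be a triangulated Laman graph, and let the formation control system induced by G have continuously differentiable control laws u_{ij}(·, d̄_{ij}). Let p ∈ P_G be an equilibrium of this system, and let {(G_i, p_i)}_{i=1}^m be the frameworks associated with the independent partition for (G,p). Then each p_i is an equilibrium of the subsystem induced by G_i (the formation control system induced by G_i with the same control laws u_{ij} for (i,j) ∈ E_i). -/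
open scoped BigOperators

set_option linter.unusedSectionVars false
set_option maxHeartbeats 1000000
noncomputable section Stmt13Aux
open Relation
open scoped Classical

variable {ι : Type*} [Fintype ι] [DecidableEq ι]

section Sums
variable {M : Type*} [AddCommGroup M]

lemma sum_ite_single'' (k : ι) (c : M) :
    (∑ j : ι, if j = k then c else 0) = c := by
  rw [Finset.sum_ite_eq' Finset.univ k (fun _ => c), if_pos (Finset.mem_univ k)]

end Sums

/-- The force exerted on `i` by `j`. -/
def eterm (f : ι → ι → ℝ → ℝ) (p : Conf ι) (i j : ι) : Pt :=
  f i j (dist (pt p i) (pt p j)) • (pt p j - pt p i)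

/-- The total force on vertex `i`, as a planar vector. -/
def vfield (X : SimpleGraph ι) (f : ι → ι → ℝ → ℝ) (p : Conf ι) (i : ι) : Pt :=
  ∑ j : ι, if X.Adj i j then eterm f p i j else 0

lemma vfield_apply (X : SimpleGraph ι) (f : ι → ι → ℝ → ℝ) (p : Conf ι) (i : ι) (c : Fin 2) :
    vfield X f p i c = formationField X f p (i, c) := by
  simp only [vfield, formationField]
  rw [WithLp.ofLp_sum, Finset.sum_apply]
  refine Finset.sum_congr rfl fun j _ => ?_
  by_cases hj : X.Adj i j
  · rw [if_pos hj, if_pos hj]; rfl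
  · rw [if_neg hj, if_neg hj]; rfl

lemma formationField_eq_zero_iff {X : SimpleGraph ι} {f : ι → ι → ℝ → ℝ} {p : Conf ι} :
    formationField X f p = 0 ↔ ∀ i, vfield X f p i = 0 := by
  constructor
  · intro h i
    ext c
    rw [vfield_apply, h]; rfl
  · intro h
    ext ic
    have : vfield X f p ic.1 ic.2 = (0 : Pt) ic.2 := by rw [h ic.1]
    rw [vfield_apply] at this
    exact this

section VfieldLemmas
variable {X Y : SimpleGraph ι} {f f' : ι → ι → ℝ → ℝ} {p : Conf ι} {i : ι}

lemma vfield_none (h : ∀ j, ¬ X.Adj i j) : vfield X f p i = 0 :=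
  Finset.sum_eq_zero fun j _ => if_neg (h j)

lemma vfield_pair {a b : ι} (hab : a ≠ b) (h : ∀ j, X.Adj i j ↔ (j = a ∨ j = b)) :
    vfield X f p i = eterm f p i a + eterm f p i b := by
  have key : ∀ j, (if X.Adj i j then eterm f p i j else 0)
      = (if j = a then eterm f p i a else 0) + (if j = b then eterm f p i b else 0) := by
    intro j
    by_cases hj : X.Adj i j
    · rw [if_pos hj]
      rcases (h j).mp hj with rfl | rfl
      · rw [if_pos rfl, if_neg hab, add_zero]
      · rw [if_neg (fun hh => hab hh.symm), if_pos rfl, zero_add]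
    · rw [if_neg hj, if_neg (fun hja => hj ((h j).mpr (Or.inl hja))),
        if_neg (fun hjb => hj ((h j).mpr (Or.inr hjb))), add_zero]
  rw [show vfield X f p i = ∑ j : ι, if X.Adj i j then eterm f p i j else 0 from rfl,
    Finset.sum_congr rfl (fun j _ => key j), Finset.sum_add_distrib,
    sum_ite_single'' a, sum_ite_single'' b]

lemma vfield_single {a : ι} (h : ∀ j, X.Adj i j ↔ j = a) :
    vfield X f p i = eterm f p i a := by
  have key : ∀ j, (if X.Adj i j then eterm f p i j else 0)
      = (if j = a then eterm f p i a else 0) := by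
    intro j
    by_cases hj : X.Adj i j
    · rw [if_pos hj]
      rcases (h j).mp hj with rfl
      rw [if_pos rfl]
    · rw [if_neg hj, if_neg (fun hja => hj ((h j).mpr hja))]
  rw [show vfield X f p i = ∑ j : ι, if X.Adj i j then eterm f p i j else 0 from rfl,
    Finset.sum_congr rfl (fun j _ => key j), sum_ite_single'' a]

lemma vfield_split {k : ι} (h : ∀ j, X.Adj i j ↔ (Y.Adj i j ∨ j = k)) (hk : ¬ Y.Adj i k) :
    vfield X f p i = vfield Y f p i + eterm f p i k := by
  have key : ∀ j, (if X.Adj i j then eterm f p i j else 0)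
      = (if Y.Adj i j then eterm f p i j else 0) + (if j = k then eterm f p i k else 0) := by
    intro j
    by_cases hj : j = k
    · subst hj
      rw [if_pos ((h j).mpr (Or.inr rfl)), if_neg hk, if_pos rfl, zero_add]
    · by_cases hy : Y.Adj i j
      · rw [if_pos ((h j).mpr (Or.inl hy)), if_pos hy, if_neg hj, add_zero]
      · rw [if_neg (fun hx => by rcases (h j).mp hx with h' | h'; exacts [hy h', hj h']),
          if_neg hy, if_neg hj, add_zero]
  rw [show vfield X f p i = ∑ j : ι, if X.Adj i j then eterm f p i j else 0 from rfl,
    Finset.sum_congr rfl (fun j _ => key j), Finset.sum_add_distrib, sum_ite_single'' k]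
  rfl

lemma vfield_congr' (h : ∀ j, X.Adj i j ↔ Y.Adj i j)
    (hf : ∀ j, X.Adj i j → eterm f p i j = eterm f' p i j) :
    vfield X f p i = vfield Y f' p i := by
  refine Finset.sum_congr rfl fun j _ => ?_
  by_cases hx : X.Adj i j
  · rw [if_pos hx, if_pos ((h j).mp hx), hf j hx]
  · rw [if_neg hx, if_neg (fun hy => hx ((h j).mpr hy))]

lemma vfield_sub_single {b : ι} (hb : X.Adj i b)
    (h : ∀ j, X.Adj i j → j ≠ b → eterm f' p i j = eterm f p i j) :
    vfield X f' p i = vfield X f p i + (eterm f' p i b - eterm f p i b) := by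
  have key : ∀ j, (if X.Adj i j then eterm f' p i j else 0)
      = (if X.Adj i j then eterm f p i j else 0)
        + (if j = b then eterm f' p i b - eterm f p i b else 0) := by
    intro j
    by_cases hj : j = b
    · subst hj
      rw [if_pos hb, if_pos hb, if_pos rfl]
      abel
    · by_cases hx : X.Adj i j
      · rw [if_pos hx, if_pos hx, if_neg hj, h j hx hj, add_zero]
      · rw [if_neg hx, if_neg hx, if_neg hj, add_zero]
  rw [show vfield X f' p i = ∑ j : ι, if X.Adj i j then eterm f' p i j else 0 from rfl,
    Finset.sum_congr rfl (fun j _ => key j), Finset.sum_add_distrib, sum_ite_single'' b]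
  rfl

end VfieldLemmas

/-- Coefficients along a line through three collinear points. -/
lemma collinear_coeffs {x y z : Pt} (hxy : x ≠ y)
    (h : Collinear ℝ ({x, y, z} : Set Pt)) :
    ∃ α : ℝ, z - x = α • (y - x) ∧ z - y = (α - 1) • (y - x) := by
  obtain ⟨w, hw⟩ := (collinear_iff_of_mem (show x ∈ ({x, y, z} : Set Pt) by simp)).mp h
  obtain ⟨ry, hy⟩ := hw y (by simp)
  obtain ⟨rz, hz⟩ := hw z (by simp)
  rw [vadd_eq_add] at hy hz
  have hry : ry ≠ 0 := by
    intro h0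
    apply hxy
    rw [hy, h0, zero_smul, zero_add]
  have hyx : y - x = ry • w := by rw [hy]; abel
  have hzx : z - x = rz • w := by rw [hz]; abel
  refine ⟨rz / ry, ?_, ?_⟩
  · rw [hzx, hyx, smul_smul, div_mul_cancel₀ _ hry]
  · have hzy : z - y = (rz - ry) • w := by rw [hz, hy, sub_smul]; abel
    rw [hzy, hyx, smul_smul, sub_mul, div_mul_cancel₀ _ hry, one_mul]

/-- For a nondegenerate triangle, the two edge vectors are independent. -/
lemma noncollinear_coeffs {x y z : Pt} (hzy : z ≠ y)
    (h : ¬ Collinear ℝ ({x, y, z} : Set Pt)) {c₁ c₂ : ℝ}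
    (hc : c₁ • (x - z) + c₂ • (y - z) = 0) : c₁ = 0 ∧ c₂ = 0 := by
  have h1 : c₁ = 0 := by
    by_contra h1
    apply h
    rw [collinear_iff_of_mem (show z ∈ ({x, y, z} : Set Pt) by simp)]
    refine ⟨y - z, fun q hq => ?_⟩
    simp only [Set.mem_insert_iff, Set.mem_singleton_iff] at hq
    rcases hq with rfl | rfl | rfl
    · refine ⟨c₁⁻¹ * (-c₂), ?_⟩
      have h3 : c₁ • (q - z) = (-c₂) • (y - z) := by
        rw [neg_smul]
        exact eq_neg_of_add_eq_zero_left hc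
      have h4 : q - z = (c₁⁻¹ * (-c₂)) • (y - z) := by
        rw [mul_smul, ← h3, smul_smul, inv_mul_cancel₀ h1, one_smul]
      rw [vadd_eq_add, ← h4]
      abel
    · exact ⟨1, by rw [vadd_eq_add, one_smul]; abel⟩
    · exact ⟨0, by rw [vadd_eq_add, zero_smul, zero_add]⟩
  refine ⟨h1, ?_⟩
  rw [h1, zero_smul, zero_add] at hc
  rcases smul_eq_zero.mp hc with h' | h'
  · exact h'
  · exact absurd (sub_eq_zero.mp h').symm hzy

/-- If `x` is isolated for `r`, anything `EqvGen`-related to it equals it. -/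
lemma eqvGen_iso {α : Type*} {r : α → α → Prop} {x : α}
    (hx : ∀ z, ¬ r x z ∧ ¬ r z x) {u v : α} (h : EqvGen r u v) : u = x ↔ v = x := by
  induction h with
  | rel a b hab =>
    constructor
    · rintro rfl; exact absurd hab (hx b).1
    · rintro rfl; exact absurd hab (hx a).2
  | refl a => exact Iff.rfl
  | symm a b _ ih => exact ih.symm
  | trans a b c _ _ ih1 ih2 => exact ih1.trans ih2

end Stmt13Aux
noncomputable section Stmt13Comb
open Relation
open scoped Classical

variable {ι : Type*} [Fintype ι] [DecidableEq ι] {G : SimpleGraph ι}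

/-- The edges created by the first `t` steps of the Henneberg sequence. -/
def Eset (H : Henneberg G) (t : ℕ) : Set (Sym2 ι) :=
  {e | e = s(H.ord ⟨0, by have := H.two_le; omega⟩, H.ord ⟨1, by have := H.two_le; omega⟩) ∨
    ∃ l : Fin (Nat.card ι), 2 ≤ (l : ℕ) ∧ (l : ℕ) ≤ t ∧
      (e = s(H.ord (H.par1 l), H.ord l) ∨ e = s(H.ord (H.par2 l), H.ord l))}

/-- The generating relation for the independent partition, truncated at step `t`. -/
def triGenLe (H : Henneberg G) (p : Conf ι) (t : ℕ) : Sym2 ι → Sym2 ι → Prop := fun e e' =>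
  ∃ l : Fin (Nat.card ι), 2 ≤ (l : ℕ) ∧ (l : ℕ) ≤ t ∧
    Collinear ℝ {pt p (H.ord (H.par1 l)), pt p (H.ord (H.par2 l)), pt p (H.ord l)} ∧
    e' = s(H.ord (H.par1 l), H.ord (H.par2 l)) ∧
    (e = s(H.ord (H.par1 l), H.ord l) ∨ e = s(H.ord (H.par2 l), H.ord l))

/-- The class of `e` in the independent partition of the first `t` steps. -/
def cls (H : Henneberg G) (p : Conf ι) (t : ℕ) (e : Sym2 ι) : Set (Sym2 ι) :=
  {e' | e' ∈ Eset H t ∧ EqvGen (triGenLe H p t) e e'}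

lemma Eset_verts {H : Henneberg G} {t : ℕ} (ht : 1 ≤ t) {e : Sym2 ι} (he : e ∈ Eset H t)
    {v : ι} (hv : v ∈ e) : ∃ m : Fin (Nat.card ι), (m : ℕ) ≤ t ∧ v = H.ord m := by
  rcases he with h | ⟨l, h2, hlt, h | h⟩ <;> subst h <;>
    rcases Sym2.mem_iff.mp hv with rfl | rfl
  · exact ⟨⟨0, by have := H.two_le; omega⟩, by simp, rfl⟩
  · exact ⟨⟨1, by have := H.two_le; omega⟩, by simpa using ht, rfl⟩
  · exact ⟨_, le_trans (le_of_lt (Fin.lt_def.mp (H.par1_lt l h2))) hlt, rfl⟩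
  · exact ⟨_, hlt, rfl⟩
  · exact ⟨_, le_trans (le_of_lt (Fin.lt_def.mp (H.par2_lt l h2))) hlt, rfl⟩
  · exact ⟨_, hlt, rfl⟩

lemma Eset_ne {H : Henneberg G} {t : ℕ} {i j : ι} (h : s(i, j) ∈ Eset H t) : i ≠ j := by
  have hinj := H.ord.injective
  rintro rfl
  have diag : ∀ {x y : ι}, s(i, i) = s(x, y) → x = y := by
    intro x y h'
    rcases Sym2.eq_iff.mp h' with ⟨h1, h2⟩ | ⟨h1, h2⟩ <;> rw [← h1, ← h2]
  rcases h with h | ⟨l, h2, _, h | h⟩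
  · exact absurd (hinj (diag h)) (by simp [Fin.ext_iff])
  · have heq := congrArg Fin.val (hinj (diag h))
    have hv := Fin.lt_def.mp (H.par1_lt l h2)
    omega
  · have heq := congrArg Fin.val (hinj (diag h))
    have hv := Fin.lt_def.mp (H.par2_lt l h2)
    omega

lemma adj_of_subset {C : Set (Sym2 ι)} (hC : ∀ {x y : ι}, s(x, y) ∈ C → x ≠ y) {i j : ι} :
    (SimpleGraph.fromEdgeSet C).Adj i j ↔ s(i, j) ∈ C := by
  rw [SimpleGraph.fromEdgeSet_adj]
  exact ⟨fun h => h.1, fun h => ⟨h, hC h⟩⟩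

lemma triGenLe_verts {H : Henneberg G} {p : Conf ι} {t : ℕ} {e e' : Sym2 ι}
    (h : triGenLe H p t e e') :
    (∀ v ∈ e, ∃ m : Fin (Nat.card ι), (m : ℕ) ≤ t ∧ v = H.ord m) ∧
    (∀ v ∈ e', ∃ m : Fin (Nat.card ι), (m : ℕ) ≤ t ∧ v = H.ord m) := by
  obtain ⟨l, h2, hlt, _, he', he⟩ := h
  have hp1 : (H.par1 l : ℕ) ≤ t := le_trans (le_of_lt (Fin.lt_def.mp (H.par1_lt l h2))) hlt
  have hp2 : (H.par2 l : ℕ) ≤ t := le_trans (le_of_lt (Fin.lt_def.mp (H.par2_lt l h2))) hlt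
  constructor
  · intro v hv
    rcases he with rfl | rfl <;> rcases Sym2.mem_iff.mp hv with rfl | rfl
    exacts [⟨_, hp1, rfl⟩, ⟨_, hlt, rfl⟩, ⟨_, hp2, rfl⟩, ⟨_, hlt, rfl⟩]
  · intro v hv
    subst he'
    rcases Sym2.mem_iff.mp hv with rfl | rfl
    exacts [⟨_, hp1, rfl⟩, ⟨_, hp2, rfl⟩]

lemma Eset_k_notmem {H : Henneberg G} {t : ℕ} (ht : 1 ≤ t) {m0 : Fin (Nat.card ι)}
    (hm0 : t < (m0 : ℕ)) {e : Sym2 ι} (he : e ∈ Eset H t) : H.ord m0 ∉ e := by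
  intro hk
  obtain ⟨m, hm, hkm⟩ := Eset_verts ht he hk
  have := H.ord.injective hkm
  rw [this] at hm0
  omega

lemma triGenLe_k_notmem {H : Henneberg G} {p : Conf ι} {t : ℕ} {m0 : Fin (Nat.card ι)}
    (hm0 : t < (m0 : ℕ)) {e e' : Sym2 ι} (h : triGenLe H p t e e') :
    H.ord m0 ∉ e ∧ H.ord m0 ∉ e' := by
  constructor <;> intro hk
  · obtain ⟨m, hm, hkm⟩ := (triGenLe_verts h).1 _ hk
    have := H.ord.injective hkm; rw [this] at hm0; omega
  · obtain ⟨m, hm, hkm⟩ := (triGenLe_verts h).2 _ hk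
    have := H.ord.injective hkm; rw [this] at hm0; omega

lemma Eset_succ {H : Henneberg G} {t : ℕ} (ht : 1 ≤ t) (htn : t + 1 < Nat.card ι) :
    Eset H (t + 1) = Eset H t ∪
      {s(H.ord (H.par1 ⟨t + 1, htn⟩), H.ord ⟨t + 1, htn⟩),
       s(H.ord (H.par2 ⟨t + 1, htn⟩), H.ord ⟨t + 1, htn⟩)} := by
  ext e
  simp only [Eset, Set.mem_setOf_eq, Set.mem_union, Set.mem_insert_iff, Set.mem_singleton_iff]
  constructor
  · rintro (h | ⟨l, h2, hlt, h⟩)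
    · exact Or.inl (Or.inl h)
    · rcases Nat.lt_or_ge (l : ℕ) (t + 1) with hl | hl
      · exact Or.inl (Or.inr ⟨l, h2, by omega, h⟩)
      · have hleq : l = ⟨t + 1, htn⟩ := Fin.ext (by simp; omega)
        subst hleq
        exact Or.inr h
  · rintro ((h | ⟨l, h2, hlt, h⟩) | h)
    · exact Or.inl h
    · exact Or.inr ⟨l, h2, by omega, h⟩
    · exact Or.inr ⟨⟨t + 1, htn⟩, by simp; omega, by simp, h⟩

lemma triGenLe_succ {H : Henneberg G} {p : Conf ι} {t : ℕ} (ht : 1 ≤ t)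
    (htn : t + 1 < Nat.card ι) (e e' : Sym2 ι) :
    triGenLe H p (t + 1) e e' ↔ triGenLe H p t e e' ∨
      (Collinear ℝ {pt p (H.ord (H.par1 ⟨t + 1, htn⟩)), pt p (H.ord (H.par2 ⟨t + 1, htn⟩)),
          pt p (H.ord ⟨t + 1, htn⟩)} ∧
        e' = s(H.ord (H.par1 ⟨t + 1, htn⟩), H.ord (H.par2 ⟨t + 1, htn⟩)) ∧
        (e = s(H.ord (H.par1 ⟨t + 1, htn⟩), H.ord ⟨t + 1, htn⟩) ∨
         e = s(H.ord (H.par2 ⟨t + 1, htn⟩), H.ord ⟨t + 1, htn⟩))) := by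
  constructor
  · rintro ⟨l, h2, hlt, hcol, he', he⟩
    rcases Nat.lt_or_ge (l : ℕ) (t + 1) with hl | hl
    · exact Or.inl ⟨l, h2, by omega, hcol, he', he⟩
    · have hleq : l = ⟨t + 1, htn⟩ := Fin.ext (by simp; omega)
      subst hleq
      exact Or.inr ⟨hcol, he', he⟩
  · rintro (⟨l, h2, hlt, h⟩ | ⟨hcol, he', he⟩)
    · exact ⟨l, h2, by omega, h⟩
    · exact ⟨⟨t + 1, htn⟩, by simp; omega, by simp, hcol, he', he⟩

end Stmt13Comb
noncomputable section Stmt13Main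
open Relation
open scoped Classical

variable {ι : Type*} [Fintype ι] [DecidableEq ι] {G : SimpleGraph ι}

lemma henneberg_step {H : Henneberg G} {p : Conf ι} (hp : p ∈ configSpace G)
    {t : ℕ} (ht : 1 ≤ t) (htn : t + 1 < Nat.card ι)
    (IH : ∀ f : ι → ι → ℝ → ℝ, (∀ i j, f i j = f j i) →
      (∀ i, vfield (SimpleGraph.fromEdgeSet (Eset H t)) f p i = 0) →
      ∀ e ∈ Eset H t, ∀ i, vfield (SimpleGraph.fromEdgeSet (cls H p t e)) f p i = 0)
    {f : ι → ι → ℝ → ℝ} (hfs : ∀ i j, f i j = f j i)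
    (heq : ∀ i, vfield (SimpleGraph.fromEdgeSet (Eset H (t + 1))) f p i = 0) :
    ∀ e ∈ Eset H (t + 1), ∀ i,
      vfield (SimpleGraph.fromEdgeSet (cls H p (t + 1) e)) f p i = 0 := by
  set l₀ : Fin (Nat.card ι) := ⟨t + 1, htn⟩ with hl₀
  set a := H.ord (H.par1 l₀) with hadef
  set b := H.ord (H.par2 l₀) with hbdef
  set k := H.ord l₀ with hkdef
  have hval : (l₀ : ℕ) = t + 1 := rfl
  have h2 : 2 ≤ (l₀ : ℕ) := by omega
  have hab : a ≠ b := fun h => H.par_ne l₀ h2 (H.ord.injective h)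
  have hlt1 := Fin.lt_def.mp (H.par1_lt l₀ h2)
  have hlt2 := Fin.lt_def.mp (H.par2_lt l₀ h2)
  have hak : a ≠ k := fun h => by
    have := congrArg Fin.val (H.ord.injective h); omega
  have hbk : b ≠ k := fun h => by
    have := congrArg Fin.val (H.ord.injective h); omega
  have hGab : G.Adj a b := H.par_adj l₀ h2
  have hGak : G.Adj a k := (H.edge_iff a k).mpr (Or.inr ⟨l₀, h2, Or.inl rfl⟩)
  have hGbk : G.Adj b k := (H.edge_iff b k).mpr (Or.inr ⟨l₀, h2, Or.inr rfl⟩)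
  have hpab : pt p a ≠ pt p b := hp a b hGab
  have hpbk : pt p b ≠ pt p k := hp b k hGbk
  have hkE : ∀ e ∈ Eset H t, k ∉ e := fun e he => Eset_k_notmem ht (by omega) he
  have habE : s(a, b) ∈ Eset H t := by
    rcases (H.edge_iff a b).mp hGab with h | ⟨l', h2', h'⟩
    · exact Or.inl h
    · have hl' : (l' : ℕ) ≤ t := by
        have hor : H.ord l' = a ∨ H.ord l' = b := by
          rcases h' with h' | h' <;> rcases Sym2.eq_iff.mp h' with ⟨h1, hh⟩ | ⟨h1, hh⟩
          · exact Or.inr hh.symm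
          · exact Or.inl h1.symm
          · exact Or.inr hh.symm
          · exact Or.inl h1.symm
        rcases hor with h'' | h'' <;>
          · have := congrArg Fin.val (H.ord.injective h''); omega
      exact Or.inr ⟨l', h2', hl', h'⟩
  have hEsucc : Eset H (t + 1) = Eset H t ∪ {s(a, k), s(b, k)} := Eset_succ ht htn
  -- Sym2 facts
  have hsak : ∀ j, (s(a, j) = s(a, k) ∨ s(a, j) = s(b, k)) ↔ j = k := by
    intro j
    constructor
    · rintro (h | h) <;> rcases Sym2.eq_iff.mp h with ⟨h1, hh⟩ | ⟨h1, hh⟩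
      exacts [hh, absurd h1 hak, absurd h1 hab, absurd h1 hak]
    · rintro rfl; exact Or.inl rfl
  have hsbk : ∀ j, (s(b, j) = s(a, k) ∨ s(b, j) = s(b, k)) ↔ j = k := by
    intro j
    constructor
    · rintro (h | h) <;> rcases Sym2.eq_iff.mp h with ⟨h1, hh⟩ | ⟨h1, hh⟩
      exacts [absurd h1.symm hab, absurd h1 hbk, hh, absurd h1 hbk]
    · rintro rfl; exact Or.inr rfl
  have hskj : ∀ j, (s(k, j) = s(a, k) ∨ s(k, j) = s(b, k)) ↔ (j = a ∨ j = b) := by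
    intro j
    constructor
    · rintro (h | h) <;> rcases Sym2.eq_iff.mp h with ⟨h1, hh⟩ | ⟨h1, hh⟩
      exacts [absurd h1 (fun h => hak h.symm), Or.inl hh,
        absurd h1 (fun h => hbk h.symm), Or.inr hh]
    · rintro (rfl | rfl)
      · exact Or.inl Sym2.eq_swap
      · exact Or.inr Sym2.eq_swap
  have hsother : ∀ i j : ι, i ≠ a → i ≠ b → i ≠ k →
      ¬(s(i, j) = s(a, k) ∨ s(i, j) = s(b, k)) := by
    intro i j hia hib hik
    rintro (h | h) <;> rcases Sym2.eq_iff.mp h with ⟨h1, hh⟩ | ⟨h1, hh⟩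
    exacts [hia h1, hik h1, hib h1, hik h1]
  -- adjacency characterizations
  have hneU : ∀ {x y : ι}, s(x, y) ∈ Eset H t ∪ {s(a, k), s(b, k)} → x ≠ y := by
    intro x y h
    refine Eset_ne (H := H) (t := t + 1) ?_
    rw [hEsucc]; exact h
  have adjU : ∀ (S : Set (Sym2 ι)), S ⊆ Eset H t → ∀ x y,
      (SimpleGraph.fromEdgeSet (S ∪ {s(a, k), s(b, k)})).Adj x y ↔
        s(x, y) ∈ S ∪ {s(a, k), s(b, k)} := by
    intro S hS x y
    apply adj_of_subset
    rintro x' y' (h | h)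
    · exact Eset_ne (hS h)
    · exact hneU (Or.inr h)
  have adjS : ∀ (S : Set (Sym2 ι)), S ⊆ Eset H t → ∀ x y,
      (SimpleGraph.fromEdgeSet S).Adj x y ↔ s(x, y) ∈ S :=
    fun S hS x y => adj_of_subset (fun h => Eset_ne (hS h))
  have hkS : ∀ (S : Set (Sym2 ι)), S ⊆ Eset H t → ∀ j,
      ¬ (SimpleGraph.fromEdgeSet S).Adj k j := by
    intro S hS j hj
    exact hkE _ (hS ((adjS S hS k j).mp hj)) (Sym2.mem_iff.mpr (Or.inl rfl))
  have hpairk : ∀ (S : Set (Sym2 ι)), S ⊆ Eset H t → ∀ j,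
      (SimpleGraph.fromEdgeSet (S ∪ {s(a, k), s(b, k)})).Adj k j ↔ (j = a ∨ j = b) := by
    intro S hS j
    rw [adjU S hS k j]
    simp only [Set.mem_union, Set.mem_insert_iff, Set.mem_singleton_iff]
    constructor
    · rintro (h | h)
      · exact absurd (Sym2.mem_iff.mpr (Or.inl rfl)) (hkE _ (hS h))
      · exact (hskj j).mp h
    · intro h; exact Or.inr ((hskj j).mpr h)
  have hsplita : ∀ (S : Set (Sym2 ι)), S ⊆ Eset H t → ∀ j,
      (SimpleGraph.fromEdgeSet (S ∪ {s(a, k), s(b, k)})).Adj a j ↔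
        ((SimpleGraph.fromEdgeSet S).Adj a j ∨ j = k) := by
    intro S hS j
    rw [adjU S hS a j, adjS S hS a j]
    simp only [Set.mem_union, Set.mem_insert_iff, Set.mem_singleton_iff]
    constructor
    · rintro (h | h)
      · exact Or.inl h
      · exact Or.inr ((hsak j).mp h)
    · rintro (h | rfl)
      · exact Or.inl h
      · exact Or.inr (Or.inl rfl)
  have hsplitb : ∀ (S : Set (Sym2 ι)), S ⊆ Eset H t → ∀ j,
      (SimpleGraph.fromEdgeSet (S ∪ {s(a, k), s(b, k)})).Adj b j ↔
        ((SimpleGraph.fromEdgeSet S).Adj b j ∨ j = k) := by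
    intro S hS j
    rw [adjU S hS b j, adjS S hS b j]
    simp only [Set.mem_union, Set.mem_insert_iff, Set.mem_singleton_iff]
    constructor
    · rintro (h | h)
      · exact Or.inl h
      · exact Or.inr ((hsbk j).mp h)
    · rintro (h | rfl)
      · exact Or.inl h
      · exact Or.inr (Or.inr rfl)
  have hnka : ∀ (S : Set (Sym2 ι)), S ⊆ Eset H t →
      ¬ (SimpleGraph.fromEdgeSet S).Adj a k := by
    intro S hS hj
    exact hkE _ (hS ((adjS S hS a k).mp hj)) (Sym2.mem_iff.mpr (Or.inr rfl))
  have hnkb : ∀ (S : Set (Sym2 ι)), S ⊆ Eset H t →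
      ¬ (SimpleGraph.fromEdgeSet S).Adj b k := by
    intro S hS hj
    exact hkE _ (hS ((adjS S hS b k).mp hj)) (Sym2.mem_iff.mpr (Or.inr rfl))
  have hadjother : ∀ (S : Set (Sym2 ι)), S ⊆ Eset H t → ∀ i : ι,
      i ≠ a → i ≠ b → i ≠ k → ∀ j,
      (SimpleGraph.fromEdgeSet (S ∪ {s(a, k), s(b, k)})).Adj i j ↔
        (SimpleGraph.fromEdgeSet S).Adj i j := by
    intro S hS i hia hib hik j
    rw [adjU S hS i j, adjS S hS i j]
    simp only [Set.mem_union, Set.mem_insert_iff, Set.mem_singleton_iff]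
    constructor
    · rintro (h | h)
      · exact h
      · exact absurd h (hsother i j hia hib hik)
    · exact Or.inl
  -- the new-vertex equilibrium
  have hX1 : SimpleGraph.fromEdgeSet (Eset H (t + 1)) =
      SimpleGraph.fromEdgeSet (Eset H t ∪ {s(a, k), s(b, k)}) := by rw [hEsucc]
  have heqU : ∀ i, vfield (SimpleGraph.fromEdgeSet (Eset H t ∪ {s(a, k), s(b, k)})) f p i = 0 := by
    intro i; rw [← hX1]; exact heq i
  have hk0 : eterm f p k a + eterm f p k b = 0 := by
    rw [← vfield_pair hab (hpairk (Eset H t) (fun _ h => h))]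
    exact heqU k
  have hknotnew : ∀ x ∈ Eset H t, ¬(x = s(a, k) ∨ x = s(b, k)) := by
    intro x hx h
    rcases h with rfl | rfl
    · exact hkE _ hx (Sym2.mem_iff.mpr (Or.inr rfl))
    · exact hkE _ hx (Sym2.mem_iff.mpr (Or.inr rfl))
  by_cases hcol : Collinear ℝ ({pt p a, pt p b, pt p k} : Set Pt)
  · -- COLLINEAR CASE
    obtain ⟨α, hα1, hα2⟩ := collinear_coeffs hpab hcol
    set v : Pt := pt p b - pt p a with hvdef
    have hv : v ≠ 0 := sub_ne_zero.mpr (fun h => hpab h.symm)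
    have hk0' : f k a (dist (pt p k) (pt p a)) • (pt p a - pt p k)
        + f k b (dist (pt p k) (pt p b)) • (pt p b - pt p k) = 0 := hk0
    set d1 := dist (pt p k) (pt p a) with hd1
    set d2 := dist (pt p k) (pt p b) with hd2
    have h5 : (f k a d1 * α + f k b d2 * (α - 1)) • v = 0 := by
      have e1 : pt p a - pt p k = -(α • v) := by rw [← hα1]; abel
      have e2 : pt p b - pt p k = -((α - 1) • v) := by rw [← hα2]; abel
      rw [e1, e2, smul_neg, smul_neg, ← neg_add] at hk0'
      rw [add_smul, mul_smul, mul_smul]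
      exact neg_eq_zero.mp hk0'
    have hscal : f k a d1 * α + f k b d2 * (α - 1) = 0 := by
      rcases smul_eq_zero.mp h5 with h' | h'
      · exact h'
      · exact absurd h' hv
    set c := f k a d1 * α with hcdef
    have hcb : f k b d2 * (α - 1) = -c := by rw [hcdef]; linarith
    set f' : ι → ι → ℝ → ℝ :=
      fun x y => if s(x, y) = s(a, b) then (fun s => f x y s + c) else f x y with hf'def
    have hf'ab : f' a b = fun s => f a b s + c := by
      show (if s(a, b) = s(a, b) then (fun s => f a b s + c) else f a b) = _
      rw [if_pos rfl]
    have hf'ba : f' b a = fun s => f b a s + c := by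
      show (if s(b, a) = s(a, b) then (fun s => f b a s + c) else f b a) = _
      rw [if_pos Sym2.eq_swap]
    have hf'ne : ∀ x y : ι, s(x, y) ≠ s(a, b) → f' x y = f x y := by
      intro x y h
      show (if s(x, y) = s(a, b) then (fun s => f x y s + c) else f x y) = _
      rw [if_neg h]
    have hfs' : ∀ x y : ι, f' x y = f' y x := by
      intro x y
      show (if s(x, y) = s(a, b) then (fun s => f x y s + c) else f x y)
        = (if s(y, x) = s(a, b) then (fun s => f y x s + c) else f y x)
      by_cases h : s(x, y) = s(a, b)
      · rw [if_pos h, if_pos (by rw [Sym2.eq_swap]; exact h), hfs x y]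
      · rw [if_neg h, if_neg (by rw [Sym2.eq_swap]; exact h), hfs x y]
    have hetak : eterm f p a k = c • v := by
      show f a k (dist (pt p a) (pt p k)) • (pt p k - pt p a) = c • v
      rw [hfs a k, dist_comm, hα1, smul_smul]
    have hetbk : eterm f p b k = -(c • v) := by
      show f b k (dist (pt p b) (pt p k)) • (pt p k - pt p b) = _
      rw [hfs b k, dist_comm, hα2, smul_smul]
      show (f k b d2 * (α - 1)) • v = -(c • v)
      rw [hcb, neg_smul]
    have hdab : eterm f' p a b - eterm f p a b = c • v := by
      show f' a b (dist (pt p a) (pt p b)) • (pt p b - pt p a)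
        - f a b (dist (pt p a) (pt p b)) • (pt p b - pt p a) = c • v
      rw [hf'ab]
      show (f a b (dist (pt p a) (pt p b)) + c) • (pt p b - pt p a)
        - f a b (dist (pt p a) (pt p b)) • (pt p b - pt p a) = c • v
      rw [add_smul, ← hvdef]
      abel
    have hdba : eterm f' p b a - eterm f p b a = -(c • v) := by
      show f' b a (dist (pt p b) (pt p a)) • (pt p a - pt p b)
        - f b a (dist (pt p b) (pt p a)) • (pt p a - pt p b) = _
      rw [hf'ba]
      show (f b a (dist (pt p b) (pt p a)) + c) • (pt p a - pt p b)
        - f b a (dist (pt p b) (pt p a)) • (pt p a - pt p b) = -(c • v)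
      have hba : pt p a - pt p b = -v := by rw [hvdef]; abel
      rw [add_smul, hba, smul_neg, smul_neg]
      abel
    have KEY : ∀ S : Set (Sym2 ι), S ⊆ Eset H t → s(a, b) ∈ S → ∀ i,
        vfield (SimpleGraph.fromEdgeSet (S ∪ {s(a, k), s(b, k)})) f p i
          = vfield (SimpleGraph.fromEdgeSet S) f' p i
            + (if i = k then eterm f p k a + eterm f p k b else 0) := by
      intro S hS hSab i
      by_cases hik : i = k
      · subst hik
        rw [if_pos rfl, vfield_pair hab (hpairk S hS), vfield_none (hkS S hS), zero_add]
      · rw [if_neg hik, add_zero]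
        by_cases hia : i = a
        · subst hia
          have hSadjab : (SimpleGraph.fromEdgeSet S).Adj a b := (adjS S hS a b).mpr hSab
          have hother : ∀ j, (SimpleGraph.fromEdgeSet S).Adj a j → j ≠ b →
              eterm f' p a j = eterm f p a j := by
            intro j _ hjb
            have hne : s(a, j) ≠ s(a, b) := by
              intro h
              rcases Sym2.eq_iff.mp h with ⟨_, hh⟩ | ⟨h1, _⟩
              exacts [hjb hh, hab h1]
            show f' a j _ • _ = f a j _ • _
            rw [hf'ne a j hne]
          rw [vfield_split (hsplita S hS) (hnka S hS), vfield_sub_single hSadjab hother,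
            hetak, hdab]
        · by_cases hib : i = b
          · subst hib
            have hSadjba : (SimpleGraph.fromEdgeSet S).Adj b a := by
              rw [adjS S hS b a]
              rw [Sym2.eq_swap]
              exact hSab
            have hother : ∀ j, (SimpleGraph.fromEdgeSet S).Adj b j → j ≠ a →
                eterm f' p b j = eterm f p b j := by
              intro j _ hja
              have hne : s(b, j) ≠ s(a, b) := by
                intro h
                rcases Sym2.eq_iff.mp h with ⟨h1, _⟩ | ⟨_, hh⟩
                exacts [hab h1.symm, hja hh]
              show f' b j _ • _ = f b j _ • _
              rw [hf'ne b j hne]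
            rw [vfield_split (hsplitb S hS) (hnkb S hS), vfield_sub_single hSadjba hother,
              hetbk, hdba]
          · apply vfield_congr' (hadjother S hS i hia hib hik)
            intro j _
            have hne : s(i, j) ≠ s(a, b) := by
              intro h
              rcases Sym2.eq_iff.mp h with ⟨h1, _⟩ | ⟨h1, _⟩
              exacts [hia h1, hib h1]
            show f i j _ • _ = f' i j _ • _
            rw [hf'ne i j hne]
    have heq' : ∀ i, vfield (SimpleGraph.fromEdgeSet (Eset H t)) f' p i = 0 := by
      intro i
      have hKi := KEY (Eset H t) (fun _ h => h) habE i
      rw [heqU i, hk0, ite_self, add_zero] at hKi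
      exact hKi.symm
    have hIHf' := IH f' hfs' heq'
    -- the projection φ
    have hknab1 : s(a, b) ≠ s(a, k) := by
      intro h
      rcases Sym2.eq_iff.mp h with ⟨_, hh⟩ | ⟨h1, _⟩
      exacts [hbk hh, hak h1]
    have hknab2 : s(a, b) ≠ s(b, k) := by
      intro h
      rcases Sym2.eq_iff.mp h with ⟨h1, _⟩ | ⟨h1, _⟩
      exacts [hab h1, hak h1]
    set φ : Sym2 ι → Sym2 ι :=
      fun x => if x = s(a, k) ∨ x = s(b, k) then s(a, b) else x with hφdef
    have hφ1 : ∀ x, (x = s(a, k) ∨ x = s(b, k)) → φ x = s(a, b) := fun x hx => if_pos hx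
    have hφ2 : ∀ x, ¬(x = s(a, k) ∨ x = s(b, k)) → φ x = x := fun x hx => if_neg hx
    have hφab : φ s(a, b) = s(a, b) := hφ2 _ (by push_neg; exact ⟨hknab1, hknab2⟩)
    have htrinew : ∀ {x y : Sym2 ι}, triGenLe H p t x y →
        ¬(x = s(a, k) ∨ x = s(b, k)) ∧ ¬(y = s(a, k) ∨ y = s(b, k)) := by
      intro x y hxy
      have h1 := triGenLe_k_notmem (m0 := l₀) (by omega) hxy
      constructor
      · rintro (rfl | rfl)
        · exact h1.1 (Sym2.mem_iff.mpr (Or.inr rfl))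
        · exact h1.1 (Sym2.mem_iff.mpr (Or.inr rfl))
      · rintro (rfl | rfl)
        · exact h1.2 (Sym2.mem_iff.mpr (Or.inr rfl))
        · exact h1.2 (Sym2.mem_iff.mpr (Or.inr rfl))
    have hEqv : ∀ x y, EqvGen (triGenLe H p (t + 1)) x y ↔
        EqvGen (triGenLe H p t) (φ x) (φ y) := by
      intro x y
      constructor
      · intro h
        induction h with
        | rel u w huw =>
          rcases (triGenLe_succ ht htn u w).mp huw with h' | ⟨_, hw', hu⟩
          · rw [hφ2 u (htrinew h').1, hφ2 w (htrinew h').2]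
            exact EqvGen.rel _ _ h'
          · have hw2 : φ w = s(a, b) := by
              have : w = s(a, b) := hw'
              rw [this]; exact hφab
            have hu2 : φ u = s(a, b) := hφ1 u hu
            rw [hw2, hu2]
            exact EqvGen.refl _
        | refl u => exact EqvGen.refl _
        | symm u w _ ih => exact EqvGen.symm _ _ ih
        | trans u w z _ _ ih1 ih2 => exact EqvGen.trans _ _ _ ih1 ih2
      · intro h
        have mono : ∀ {x' y' : Sym2 ι}, EqvGen (triGenLe H p t) x' y' →
            EqvGen (triGenLe H p (t + 1)) x' y' :=
          fun h' => EqvGen.mono (fun u w huw => (triGenLe_succ ht htn u w).mpr (Or.inl huw)) _ _ h'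
        have hstep : ∀ z, EqvGen (triGenLe H p (t + 1)) z (φ z) := by
          intro z
          by_cases hz : z = s(a, k) ∨ z = s(b, k)
          · rw [hφ1 z hz]
            exact EqvGen.rel _ _ ((triGenLe_succ ht htn z s(a, b)).mpr (Or.inr ⟨hcol, rfl, hz⟩))
          · rw [hφ2 z hz]
            exact EqvGen.refl _
        exact EqvGen.trans _ _ _ (hstep x) (EqvGen.trans _ _ _ (mono h) (EqvGen.symm _ _ (hstep y)))
    intro e he i
    have he' : e ∈ Eset H t ∪ {s(a, k), s(b, k)} := by rw [← hEsucc]; exact he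
    have hφeE : φ e ∈ Eset H t := by
      by_cases hz : e = s(a, k) ∨ e = s(b, k)
      · rw [hφ1 e hz]; exact habE
      · rw [hφ2 e hz]
        rcases he' with h | h
        · exact h
        · exact absurd (by simpa using h) hz
    by_cases habC : EqvGen (triGenLe H p t) (φ e) s(a, b)
    · have hCeq : cls H p (t + 1) e = cls H p t (φ e) ∪ {s(a, k), s(b, k)} := by
        ext e'
        simp only [cls, Set.mem_setOf_eq, Set.mem_union, Set.mem_insert_iff,
          Set.mem_singleton_iff]
        constructor
        · rintro ⟨heE, hg⟩
          by_cases hz : e' = s(a, k) ∨ e' = s(b, k)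
          · exact Or.inr hz
          · left
            constructor
            · have h' : e' ∈ Eset H t ∪ {s(a, k), s(b, k)} := by rw [← hEsucc]; exact heE
              rcases h' with h | h
              · exact h
              · exact absurd (by simpa using h) hz
            · have h3 := (hEqv e e').mp hg
              rwa [hφ2 e' hz] at h3
        · rintro (⟨heE, hg⟩ | hz)
          · refine ⟨by rw [hEsucc]; exact Or.inl heE, ?_⟩
            rw [hEqv e e', hφ2 e' (hknotnew e' heE)]
            exact hg
          · refine ⟨by rw [hEsucc]; right; simpa using hz, ?_⟩
            rw [hEqv e e', hφ1 e' hz]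
            exact habC
      rw [hCeq]
      have hsub : cls H p t (φ e) ⊆ Eset H t := fun _ h => h.1
      have hmem : s(a, b) ∈ cls H p t (φ e) := ⟨habE, habC⟩
      rw [KEY _ hsub hmem i, hIHf' (φ e) hφeE i, zero_add]
      by_cases hik : i = k
      · rw [if_pos hik, hk0]
      · rw [if_neg hik]
    · have hCeq : cls H p (t + 1) e = cls H p t (φ e) := by
        ext e'
        simp only [cls, Set.mem_setOf_eq]
        constructor
        · rintro ⟨heE, hg⟩
          by_cases hz : e' = s(a, k) ∨ e' = s(b, k)
          · have h3 := (hEqv e e').mp hg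
            rw [hφ1 e' hz] at h3
            exact absurd h3 habC
          · constructor
            · have h' : e' ∈ Eset H t ∪ {s(a, k), s(b, k)} := by rw [← hEsucc]; exact heE
              rcases h' with h | h
              · exact h
              · exact absurd (by simpa using h) hz
            · have h3 := (hEqv e e').mp hg
              rwa [hφ2 e' hz] at h3
        · rintro ⟨heE, hg⟩
          refine ⟨by rw [hEsucc]; exact Or.inl heE, ?_⟩
          rw [hEqv e e', hφ2 e' (hknotnew e' heE)]
          exact hg
      rw [hCeq]
      have hsub : cls H p t (φ e) ⊆ Eset H t := fun _ h => h.1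
      have hnab : s(a, b) ∉ cls H p t (φ e) := fun h => habC h.2
      have hcongr : vfield (SimpleGraph.fromEdgeSet (cls H p t (φ e))) f p i
          = vfield (SimpleGraph.fromEdgeSet (cls H p t (φ e))) f' p i := by
        apply vfield_congr' (fun j => Iff.rfl)
        intro j hj
        have hmem := (adjS _ hsub i j).mp hj
        have hne : s(i, j) ≠ s(a, b) := fun h => hnab (h ▸ hmem)
        show f i j _ • _ = f' i j _ • _
        rw [hf'ne i j hne]
      rw [hcongr]
      exact hIHf' (φ e) hφeE i
  · -- NONCOLLINEAR CASE
    have hk0' : f k a (dist (pt p k) (pt p a)) • (pt p a - pt p k)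
        + f k b (dist (pt p k) (pt p b)) • (pt p b - pt p k) = 0 := hk0
    have hzero := noncollinear_coeffs (show pt p k ≠ pt p b from fun h => hpbk h.symm) hcol hk0'
    have hetak0 : eterm f p a k = 0 := by
      show f a k (dist (pt p a) (pt p k)) • (pt p k - pt p a) = 0
      rw [hfs a k, dist_comm, hzero.1, zero_smul]
    have hetbk0 : eterm f p b k = 0 := by
      show f b k (dist (pt p b) (pt p k)) • (pt p k - pt p b) = 0
      rw [hfs b k, dist_comm, hzero.2, zero_smul]
    have hetka0 : eterm f p k a = 0 := by
      show f k a (dist (pt p k) (pt p a)) • (pt p a - pt p k) = 0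
      rw [hzero.1, zero_smul]
    have hetkb0 : eterm f p k b = 0 := by
      show f k b (dist (pt p k) (pt p b)) • (pt p b - pt p k) = 0
      rw [hzero.2, zero_smul]
    have KEY2 : ∀ S : Set (Sym2 ι), S ⊆ Eset H t → ∀ i,
        vfield (SimpleGraph.fromEdgeSet (S ∪ {s(a, k), s(b, k)})) f p i
          = vfield (SimpleGraph.fromEdgeSet S) f p i := by
      intro S hS i
      by_cases hik : i = k
      · subst hik
        rw [vfield_pair hab (hpairk S hS), vfield_none (hkS S hS), hetka0, hetkb0, add_zero]
      · by_cases hia : i = a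
        · subst hia
          rw [vfield_split (hsplita S hS) (hnka S hS), hetak0, add_zero]
        · by_cases hib : i = b
          · subst hib
            rw [vfield_split (hsplitb S hS) (hnkb S hS), hetbk0, add_zero]
          · exact vfield_congr' (hadjother S hS i hia hib hik) (fun j _ => rfl)
    have heq0 : ∀ i, vfield (SimpleGraph.fromEdgeSet (Eset H t)) f p i = 0 := by
      intro i
      rw [← KEY2 (Eset H t) (fun _ h => h) i]
      exact heqU i
    have hIHf := IH f hfs heq0
    have htri : ∀ x y, triGenLe H p (t + 1) x y ↔ triGenLe H p t x y := by
      intro x y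
      rw [triGenLe_succ ht htn]
      constructor
      · rintro (h | ⟨hc, _, _⟩)
        · exact h
        · exact absurd hc hcol
      · exact Or.inl
    have hEqv : ∀ x y, EqvGen (triGenLe H p (t + 1)) x y ↔ EqvGen (triGenLe H p t) x y :=
      fun x y => ⟨EqvGen.mono (fun u w h => (htri u w).mp h) x y,
        EqvGen.mono (fun u w h => (htri u w).mpr h) x y⟩
    intro e he i
    have he' : e ∈ Eset H t ∪ {s(a, k), s(b, k)} := by rw [← hEsucc]; exact he
    rcases he' with heE | hnew
    · have hCeq : cls H p (t + 1) e = cls H p t e := by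
        ext e'
        simp only [cls, Set.mem_setOf_eq]
        constructor
        · rintro ⟨h1, hg⟩
          have hg' := (hEqv e e').mp hg
          refine ⟨?_, hg'⟩
          have h'' : e' ∈ Eset H t ∪ {s(a, k), s(b, k)} := by rw [← hEsucc]; exact h1
          rcases h'' with h | h
          · exact h
          · exfalso
            have hke' : k ∈ e' := by
              rcases (by simpa using h : e' = s(a, k) ∨ e' = s(b, k)) with rfl | rfl <;>
                exact Sym2.mem_iff.mpr (Or.inr rfl)
            have hiso : ∀ z, ¬ triGenLe H p t e' z ∧ ¬ triGenLe H p t z e' := by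
              intro z
              exact ⟨fun hz => (triGenLe_k_notmem (m0 := l₀) (by omega) hz).1 hke',
                fun hz => (triGenLe_k_notmem (m0 := l₀) (by omega) hz).2 hke'⟩
            have heqe : e = e' := (eqvGen_iso hiso hg').mpr rfl
            rw [← heqe] at h
            exact hknotnew e heE (by simpa using h)
        · rintro ⟨h1, hg⟩
          exact ⟨by rw [hEsucc]; exact Or.inl h1, (hEqv e e').mpr hg⟩
      rw [hCeq]
      exact hIHf e heE i
    · have hke : k ∈ e := by
        rcases (by simpa using hnew : e = s(a, k) ∨ e = s(b, k)) with rfl | rfl <;>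
          exact Sym2.mem_iff.mpr (Or.inr rfl)
      have hiso : ∀ z, ¬ triGenLe H p t e z ∧ ¬ triGenLe H p t z e := by
        intro z
        exact ⟨fun hz => (triGenLe_k_notmem (m0 := l₀) (by omega) hz).1 hke,
          fun hz => (triGenLe_k_notmem (m0 := l₀) (by omega) hz).2 hke⟩
      have hCeq : cls H p (t + 1) e = {e} := by
        ext e'
        simp only [cls, Set.mem_setOf_eq, Set.mem_singleton_iff]
        constructor
        · rintro ⟨h1, hg⟩
          exact (eqvGen_iso hiso ((hEqv e e').mp hg)).mp rfl
        · rintro rfl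
          exact ⟨he, EqvGen.refl _⟩
      rw [hCeq]
      rcases (by simpa using hnew : e = s(a, k) ∨ e = s(b, k)) with rfl | rfl
      · have hadj : ∀ x y : ι, (SimpleGraph.fromEdgeSet ({s(a, k)} : Set (Sym2 ι))).Adj x y ↔
            s(x, y) = s(a, k) := by
          intro x y
          apply adj_of_subset
          intro x' y' h
          rw [Set.mem_singleton_iff] at h
          rcases Sym2.eq_iff.mp h with ⟨rfl, rfl⟩ | ⟨rfl, rfl⟩
          · exact hak
          · exact fun hh => hak hh.symm
        by_cases hia : i = a
        · subst hia
          have hone : ∀ j, (SimpleGraph.fromEdgeSet ({s(a, k)} : Set (Sym2 ι))).Adj a j ↔ j = k := by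
            intro j
            rw [hadj a j]
            constructor
            · intro h
              rcases Sym2.eq_iff.mp h with ⟨_, hh⟩ | ⟨h1, _⟩
              exacts [hh, absurd h1 hak]
            · rintro rfl; rfl
          rw [vfield_single hone, hetak0]
        · by_cases hik : i = k
          · subst hik
            have hone : ∀ j, (SimpleGraph.fromEdgeSet ({s(a, k)} : Set (Sym2 ι))).Adj k j ↔ j = a := by
              intro j
              rw [hadj k j]
              constructor
              · intro h
                rcases Sym2.eq_iff.mp h with ⟨h1, _⟩ | ⟨_, hh⟩
                exacts [absurd h1 (fun hh => hak hh.symm), hh]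
              · rintro rfl; exact Sym2.eq_swap
            rw [vfield_single hone, hetka0]
          · apply vfield_none
            intro j hj
            rcases Sym2.eq_iff.mp ((hadj i j).mp hj) with ⟨h1, _⟩ | ⟨h1, _⟩
            exacts [hia h1, hik h1]
      · have hadj : ∀ x y : ι, (SimpleGraph.fromEdgeSet ({s(b, k)} : Set (Sym2 ι))).Adj x y ↔
            s(x, y) = s(b, k) := by
          intro x y
          apply adj_of_subset
          intro x' y' h
          rw [Set.mem_singleton_iff] at h
          rcases Sym2.eq_iff.mp h with ⟨rfl, rfl⟩ | ⟨rfl, rfl⟩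
          · exact hbk
          · exact fun hh => hbk hh.symm
        by_cases hib : i = b
        · subst hib
          have hone : ∀ j, (SimpleGraph.fromEdgeSet ({s(b, k)} : Set (Sym2 ι))).Adj b j ↔ j = k := by
            intro j
            rw [hadj b j]
            constructor
            · intro h
              rcases Sym2.eq_iff.mp h with ⟨_, hh⟩ | ⟨h1, _⟩
              exacts [hh, absurd h1 hbk]
            · rintro rfl; rfl
          rw [vfield_single hone, hetbk0]
        · by_cases hik : i = k
          · subst hik
            have hone : ∀ j, (SimpleGraph.fromEdgeSet ({s(b, k)} : Set (Sym2 ι))).Adj k j ↔ j = b := by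
              intro j
              rw [hadj k j]
              constructor
              · intro h
                rcases Sym2.eq_iff.mp h with ⟨h1, _⟩ | ⟨_, hh⟩
                exacts [absurd h1 (fun hh => hbk hh.symm), hh]
              · rintro rfl; exact Sym2.eq_swap
            rw [vfield_single hone, hetkb0]
          · apply vfield_none
            intro j hj
            rcases Sym2.eq_iff.mp ((hadj i j).mp hj) with ⟨h1, _⟩ | ⟨h1, _⟩
            exacts [hib h1, hik h1]

end Stmt13Main
noncomputable section Stmt13Final
open Relation
open scoped Classical

variable {ι : Type*} [Fintype ι] [DecidableEq ι] {G : SimpleGraph ι}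

lemma main_induction {H : Henneberg G} {p : Conf ι} (hp : p ∈ configSpace G) :
    ∀ t : ℕ, 1 ≤ t → t < Nat.card ι →
    ∀ f : ι → ι → ℝ → ℝ, (∀ i j, f i j = f j i) →
    (∀ i, vfield (SimpleGraph.fromEdgeSet (Eset H t)) f p i = 0) →
    ∀ e ∈ Eset H t, ∀ i, vfield (SimpleGraph.fromEdgeSet (cls H p t e)) f p i = 0 := by
  intro t
  induction t with
  | zero => omega
  | succ t IHt =>
    intro ht1 htn f hfs heq e he i
    rcases Nat.eq_zero_or_pos t with rfl | ht
    · have hE1 : ∀ e', e' ∈ Eset H (0 + 1) →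
          e' = s(H.ord ⟨0, by have := H.two_le; omega⟩, H.ord ⟨1, by have := H.two_le; omega⟩) := by
        intro e' he'
        rcases he' with h | ⟨l, h2, hl, _⟩
        · exact h
        · omega
      have hkey : cls H p (0 + 1) e = Eset H (0 + 1) := by
        ext e'
        simp only [cls, Set.mem_setOf_eq]
        constructor
        · exact fun h => h.1
        · intro h
          refine ⟨h, ?_⟩
          rw [hE1 e' h, ← hE1 e he]
          exact EqvGen.refl e
      rw [hkey]
      exact heq i
    · exact henneberg_step hp ht htn (IHt ht (by omega)) hfs heq e he i

end Stmt13Final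

/-- Proposition 4.1 of the paper. If `p` is an equilibrium of the
formation control system induced by a triangulated Laman graph `G` (with continuously
differentiable control laws), then for every class `C` of the independent partition for
`(G, p)`, the induced sub-configuration is an equilibrium of the subsystem induced by the
subgraph `G_C` (with the same control laws on the edges in `C`). -/
theorem stmt13 {ι : Type*} [Fintype ι] [DecidableEq ι] (G : SimpleGraph ι)
    (hG : IsTriangulatedLaman G) (H : Henneberg G)
    (f : ι → ι → ℝ → ℝ) (hf : ∀ i j, ContDiffOn ℝ 1 (f i j) (Set.Ioi 0))
    (hfsymm : ∀ i j, f i j = f j i)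
    (p : Conf ι) (hp : p ∈ configSpace G)
    (heq : formationField G f p = 0) :
    ∀ C ∈ indepPartition H p, formationField (SimpleGraph.fromEdgeSet C) f p = 0 := by
  intro C hC
  obtain ⟨e, heG, hCdef⟩ := hC
  have h2 := H.two_le
  set t := Nat.card ι - 1 with htdef
  have ht1 : 1 ≤ t := by omega
  have htn : t < Nat.card ι := by omega
  have hEG : G.edgeSet = Eset H t := by
    ext e'
    induction e' using Sym2.ind with
    | _ i j =>
      rw [SimpleGraph.mem_edgeSet, H.edge_iff]
      simp only [Eset, Set.mem_setOf_eq]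
      constructor
      · rintro (h | ⟨l, hl2, h⟩)
        · exact Or.inl h
        · exact Or.inr ⟨l, hl2, by have := l.isLt; omega, h⟩
      · rintro (h | ⟨l, hl2, _, h⟩)
        · exact Or.inl h
        · exact Or.inr ⟨l, hl2, h⟩
  have htri : ∀ x y, triGen H p x y ↔ triGenLe H p t x y := by
    intro x y
    constructor
    · rintro ⟨l, hl2, h⟩
      exact ⟨l, hl2, by have := l.isLt; omega, h⟩
    · rintro ⟨l, hl2, _, h⟩
      exact ⟨l, hl2, h⟩
  have hEqv : ∀ x y, Relation.EqvGen (triGen H p) x y ↔ Relation.EqvGen (triGenLe H p t) x y :=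
    fun x y => ⟨Relation.EqvGen.mono (fun u w h => (htri u w).mp h) x y,
      Relation.EqvGen.mono (fun u w h => (htri u w).mpr h) x y⟩
  have hCcls : C = cls H p t e := by
    rw [hCdef]
    ext e'
    simp only [cls, Set.mem_setOf_eq]
    rw [hEG]
    exact and_congr Iff.rfl (hEqv e e')
  have hX : SimpleGraph.fromEdgeSet (Eset H t) = G := by
    ext i j
    rw [SimpleGraph.fromEdgeSet_adj]
    constructor
    · rintro ⟨h, hne⟩
      rw [← SimpleGraph.mem_edgeSet, hEG]
      exact h
    · intro h
      refine ⟨?_, h.ne⟩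
      rw [← hEG]
      exact h
  have heqv : ∀ i, vfield (SimpleGraph.fromEdgeSet (Eset H t)) f p i = 0 := by
    rw [hX]
    exact formationField_eq_zero_iff.mp heq
  have heE : e ∈ Eset H t := by rw [← hEG]; exact heG
  have hfin := main_induction hp t ht1 htn f hfsymm heqv e heE
  rw [hCcls]
  exact formationField_eq_zero_iff.mpr hfin
end
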